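/- arXiv:math/9712280 — 11 statements merged into one kernel-verified Lean document; each statement's English description precedes it below -/
import Mathlib

section
/- (Boundary Schwarz Lemma) Under hypotheses (a)–(d), the derivative of f at the boundary point b satisfies |f'(b)| ≥ 2/(1 + |f'(0)|). -/
open Complex Filter

lemma bsl_aux (t α r : ℝ) (ht0 : 0 ≤ t) (ht1 : t ≤ 1) (hα0 : 0 ≤ α) (hα1 : α ≤ 1)
    (hr0 : 0 ≤ r)
    (hQ : t^2*(1-α^2*r^2) - 2*α*t*(1-r^2) + α^2 - r^2 ≤ 0) :
    t*(1+α*r) ≤ α + r := by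
  set P1 := α + r - t*(1+α*r) with hP1
  set P2 := t*(1-α*r) - α + r with hP2
  have hid : P1 * P2 = -(t^2*(1-α^2*r^2) - 2*α*t*(1-r^2) + α^2 - r^2) := by
    rw [hP1, hP2]; ring
  have hprod : 0 ≤ P1 * P2 := by rw [hid]; linarith
  have hsum : 0 ≤ P1 + P2 := by
    have h1 : t * α ≤ 1 := mul_le_one₀ ht1 hα0 hα1
    have : P1 + P2 = 2*r*(1 - t*α) := by rw [hP1, hP2]; ring
    rw [this]; nlinarith
  nlinarith [hprod, hsum]

open Complex Metric Set

lemma bsl_key (f : ℂ → ℂ) (ha : DifferentiableOn ℂ f (ball 0 1))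
    (hb : Set.MapsTo f (ball 0 1) (ball (0:ℂ) 1)) (hc : f 0 = 0) :
    ∀ z ∈ ball (0:ℂ) 1,
      ‖f z‖ * (1 + ‖deriv f 0‖ * ‖z‖)
        ≤ ‖z‖ * (‖deriv f 0‖ + ‖z‖) := by
  set g := dslope f 0 with hgdef
  have hmem : ball (0:ℂ) 1 ∈ nhds (0:ℂ) := ball_mem_nhds _ one_pos
  have hgd : DifferentiableOn ℂ g (ball 0 1) := (differentiableOn_dslope hmem).mpr ha
  have hmaps : Set.MapsTo f (ball 0 1) (ball (f 0) 1) := by rwa [hc]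
  have hg1 : ∀ z ∈ ball (0:ℂ) 1, ‖g z‖ ≤ 1 := by
    intro z hz
    have := Complex.norm_dslope_le_div_of_mapsTo_ball ha (hmaps.mono_right ball_subset_closedBall) hz
    simpa using this
  have hg0 : g 0 = deriv f 0 := dslope_same f 0
  have hfz : ∀ z ∈ ball (0:ℂ) 1, f z = z * g z := by
    intro z hz
    rcases eq_or_ne z 0 with rfl | hz0
    · simp [hc]
    · rw [hgdef, dslope_of_ne f hz0, slope_def_field, hc, sub_zero, sub_zero,
        mul_comm, div_mul_cancel₀ _ hz0]
  set α := ‖deriv f 0‖ with hαdef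
  have hα0 : 0 ≤ α := norm_nonneg _
  have hα1 : α ≤ 1 := by rw [hαdef, ← hg0]; exact hg1 0 (mem_ball_self one_pos)
  have key : ∀ z ∈ ball (0:ℂ) 1,
      ‖g z‖ * (1 + α * ‖z‖) ≤ α + ‖z‖ := by
    by_cases hcase : ∀ w ∈ ball (0:ℂ) 1, ‖g w‖ < 1
    · -- Möbius + Schwarz (Schwarz–Pick)
      set a := deriv f 0 with hadef
      have hαlt : α < 1 := by rw [hαdef, ← hg0]; exact hcase 0 (mem_ball_self one_pos)
      set φ := fun z => (g z - a) / (1 - (starRingEnd ℂ) a * g z) with hφdef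
      have hden : ∀ z ∈ ball (0:ℂ) 1, 1 - (starRingEnd ℂ) a * g z ≠ 0 := by
        intro z hz h
        rw [sub_eq_zero] at h
        have h2 : ‖(starRingEnd ℂ) a * g z‖ < 1 := by
          rw [norm_mul, Complex.norm_conj]
          calc ‖a‖ * ‖g z‖ ≤ α * 1 :=
                mul_le_mul (le_of_eq hαdef.symm) (hg1 z hz) (norm_nonneg _) hα0
            _ < 1 := by linarith
        rw [← h] at h2; simp at h2
      have hφd : DifferentiableOn ℂ φ (ball 0 1) :=
        DifferentiableOn.div (hgd.sub (differentiableOn_const a))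
          ((differentiableOn_const 1).sub ((differentiableOn_const _).mul hgd)) hden
      have hφ0 : φ 0 = 0 := by simp [hφdef, hg0]
      have hφlt : ∀ z ∈ ball (0:ℂ) 1, ‖φ z‖ < 1 := by
        intro z hz
        rw [hφdef]
        simp only [norm_div]
        rw [div_lt_one (norm_pos_iff.mpr (hden z hz))]
        have hna : Complex.normSq a < 1 := by
          rw [← Complex.sq_norm, ← hαdef]; nlinarith
        have hng : Complex.normSq (g z) < 1 := by
          rw [← Complex.sq_norm]; nlinarith [hcase z hz, norm_nonneg (g z)]
        have hsqlt : Complex.normSq (g z - a) < Complex.normSq (1 - (starRingEnd ℂ) a * g z) := by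
          rw [Complex.normSq_sub, Complex.normSq_sub]
          have e1 : Complex.normSq ((starRingEnd ℂ) a * g z)
              = Complex.normSq a * Complex.normSq (g z) := by
            rw [map_mul, Complex.normSq_conj]
          have e2 : ((1:ℂ) * (starRingEnd ℂ) ((starRingEnd ℂ) a * g z)).re
              = (g z * (starRingEnd ℂ) a).re := by
            rw [one_mul, map_mul, Complex.conj_conj]
            rw [show a * (starRingEnd ℂ) (g z) = (starRingEnd ℂ) (g z * (starRingEnd ℂ) a) by
              rw [map_mul, Complex.conj_conj, mul_comm]]
            exact Complex.conj_re _
          rw [e1, e2, Complex.normSq_one]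
          nlinarith
        calc ‖g z - a‖ = Real.sqrt (Complex.normSq (g z - a)) := Complex.norm_def _
          _ < Real.sqrt (Complex.normSq (1 - (starRingEnd ℂ) a * g z)) :=
              Real.sqrt_lt_sqrt (Complex.normSq_nonneg _) hsqlt
          _ = ‖1 - (starRingEnd ℂ) a * g z‖ := (Complex.norm_def _).symm
      have hφmaps : Set.MapsTo φ (ball 0 1) (ball (φ 0) 1) := by
        intro z hz
        rw [hφ0, mem_ball, Complex.dist_eq, sub_zero]
        exact hφlt z hz
      have hφle : ∀ z ∈ ball (0:ℂ) 1, ‖φ z‖ ≤ ‖z‖ := by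
        intro z hz
        rcases eq_or_ne z 0 with rfl | hz0
        · simp [hφ0]
        · have h1 := Complex.norm_dslope_le_div_of_mapsTo_ball hφd (hφmaps.mono_right ball_subset_closedBall) hz
          rw [dslope_of_ne φ hz0, slope_def_field, hφ0, sub_zero, sub_zero] at h1
          simp only [norm_div, div_one] at h1
          rw [div_le_one (norm_pos_iff.mpr hz0)] at h1
          calc ‖φ z‖ ≤ 1 * ‖z‖ := by simpa using h1
            _ = ‖z‖ := one_mul _
      intro z hz
      have h2 : ‖g z - a‖
          ≤ ‖z‖ * ‖1 - (starRingEnd ℂ) a * g z‖ := by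
        have h3 := hφle z hz
        rw [hφdef] at h3
        simp only [norm_div] at h3
        rw [div_le_iff₀ (norm_pos_iff.mpr (hden z hz))] at h3
        linarith [h3, mul_comm (‖z‖) (‖1 - (starRingEnd ℂ) a * g z‖)]
      set t := ‖g z‖ with htdef
      set r := ‖z‖ with hrdef
      set s := (g z * (starRingEnd ℂ) a).re with hsdef
      have hsq : t^2 - 2*s + α^2 ≤ r^2 * (1 - 2*s + α^2 * t^2) := by
        have h4 : ‖g z - a‖ ^ 2
            ≤ (‖z‖ * ‖1 - (starRingEnd ℂ) a * g z‖)^2 := by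
          apply pow_le_pow_left₀ (norm_nonneg _) h2
        rw [mul_pow, Complex.sq_norm, Complex.sq_norm, Complex.sq_norm] at h4
        rw [Complex.normSq_sub, Complex.normSq_sub] at h4
        have e1 : Complex.normSq ((starRingEnd ℂ) a * g z)
            = Complex.normSq a * Complex.normSq (g z) := by
          rw [map_mul, Complex.normSq_conj]
        have e2 : ((1:ℂ) * (starRingEnd ℂ) ((starRingEnd ℂ) a * g z)).re
            = (g z * (starRingEnd ℂ) a).re := by
          rw [one_mul, map_mul, Complex.conj_conj]
          rw [show a * (starRingEnd ℂ) (g z) = (starRingEnd ℂ) (g z * (starRingEnd ℂ) a) by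
            rw [map_mul, Complex.conj_conj, mul_comm]]
          exact Complex.conj_re _
        rw [e1, e2, Complex.normSq_one] at h4
        rw [← Complex.sq_norm, ← Complex.sq_norm, ← Complex.sq_norm, ← hαdef] at h4
        rw [← htdef, ← hrdef, ← hsdef] at h4
        nlinarith [h4]
      have hs : s ≤ α * t := by
        calc s ≤ ‖g z * (starRingEnd ℂ) a‖ := Complex.re_le_norm _
          _ = t * α := by rw [norm_mul, Complex.norm_conj, ← htdef, ← hαdef]
          _ = α * t := mul_comm _ _
      have hr1 : r ≤ 1 := le_of_lt (by rw [hrdef]; simpa [Complex.dist_eq] using hz)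
      have hr2 : (0:ℝ) ≤ 1 - r^2 := by nlinarith [norm_nonneg z, hr1]
      apply bsl_aux t α r (norm_nonneg _) (hg1 z hz) hα0 hα1 (norm_nonneg _)
      nlinarith [hsq, mul_nonneg (sub_nonneg.mpr hs) hr2]
    · -- g attains modulus 1 inside: constant by maximum principle
      push_neg at hcase
      obtain ⟨w₀, hw₀, hw₀1⟩ := hcase
      have hmax : IsMaxOn (norm ∘ g) (ball 0 1) w₀ := by
        intro z hz
        simp only [Function.comp_apply]
        exact le_trans (hg1 z hz) hw₀1
      have heq : Set.EqOn g (Function.const ℂ (g w₀)) (ball 0 1) :=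
        Complex.eqOn_of_isPreconnected_of_isMaxOn_norm (convex_ball 0 1).isPreconnected
          isOpen_ball hgd hw₀ hmax
      have hgw : ‖g w₀‖ = 1 :=
        le_antisymm (hg1 w₀ hw₀) hw₀1
      have hαeq : α = 1 := by
        rw [hαdef, ← hg0, heq (mem_ball_self one_pos)]
        exact hgw
      intro z hz
      rw [heq hz, hαeq]
      simp only [Function.const_apply, hgw]
      linarith [norm_nonneg z]
  intro z hz
  have hk := key z hz
  rw [hfz z hz, norm_mul]
  nlinarith [hk, norm_nonneg z, norm_nonneg (g z)]

/-- **The boundary Schwarz Lemma.** If `f` is holomorphic on the unit disk,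
maps it into itself with `f 0 = 0`, extends continuously to a boundary point `b`
with `|f b| = 1`, and has a derivative `fb'` at `b` (as a limit from within the disk),
then `|f'(b)| ≥ 2 / (1 + |f'(0)|)`. -/
theorem boundary_schwarz_lemma
    (f : ℂ → ℂ) (b fb' : ℂ)
    (ha : DifferentiableOn ℂ f {z : ℂ | ‖z‖ < 1})
    (hb : ∀ z : ℂ, ‖z‖ < 1 → ‖f z‖ < 1)
    (hc : f 0 = 0)
    (hbmod : ‖b‖ = 1)
    (hcont : ContinuousWithinAt f ({z : ℂ | ‖z‖ < 1} ∪ {b}) b)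
    (hfb : ‖f b‖ = 1)
    (hderiv : Tendsto (fun z => (f z - f b) / (z - b))
      (nhdsWithin b {z : ℂ | ‖z‖ < 1}) (nhds fb')) :
    2 / (1 + ‖deriv f 0‖) ≤ ‖fb'‖ := by
  have hset : {z : ℂ | ‖z‖ < 1} = ball (0:ℂ) 1 := by
    ext z; simp [Metric.mem_ball, Complex.dist_eq]
  have hmapsTo : Set.MapsTo f (ball 0 1) (ball (0:ℂ) 1) := by
    intro z hz
    rw [mem_ball, Complex.dist_eq, sub_zero]
    apply hb
    simpa [Complex.dist_eq] using hz
  have hkey := bsl_key f (hset ▸ ha) hmapsTo hc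
  set α := ‖deriv f 0‖ with hα
  have hα0 : 0 ≤ α := norm_nonneg _
  haveI hNB : (nhdsWithin (1:ℝ) (Set.Ioo 0 1)).NeBot := by
    apply mem_closure_iff_nhdsWithin_neBot.mp
    rw [closure_Ioo (by norm_num : (0:ℝ) ≠ 1)]
    exact ⟨by norm_num, le_refl 1⟩
  have h1 : Tendsto (fun r : ℝ => ((r:ℂ) * b)) (nhdsWithin 1 (Set.Ioo 0 1))
      (nhdsWithin b {z : ℂ | ‖z‖ < 1}) := by
    rw [tendsto_nhdsWithin_iff]
    constructor
    · have hcont2 : Tendsto (fun r : ℝ => ((r:ℂ) * b)) (nhds 1) (nhds b) := by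
        have := (show Continuous (fun r : ℝ => (r:ℂ) * b) from
          Complex.continuous_ofReal.mul (continuous_const (y := b))).tendsto 1
        simpa using this
      exact hcont2.mono_left nhdsWithin_le_nhds
    · filter_upwards [self_mem_nhdsWithin] with r hr
      simp only [Set.mem_setOf_eq, norm_mul, Complex.norm_real, Real.norm_eq_abs, hbmod, mul_one]
      rw [abs_of_pos hr.1]; exact hr.2
  have h2 : Tendsto (fun r : ℝ => ‖(f ((r:ℂ)*b) - f b) / ((r:ℂ)*b - b)‖)
      (nhdsWithin 1 (Set.Ioo 0 1)) (nhds (‖fb'‖)) :=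
    (continuous_norm.tendsto fb').comp (hderiv.comp h1)
  have h3 : Tendsto (fun r : ℝ => (1+r)/(1+α*r)) (nhdsWithin 1 (Set.Ioo 0 1))
      (nhds (2/(1+α))) := by
    have hne : (1+α*1 : ℝ) ≠ 0 := by positivity
    have ht : Tendsto (fun r : ℝ => (1+r)/(1+α*r)) (nhds 1) (nhds ((1+1)/(1+α*1))) := by
      apply Tendsto.div
      · exact (continuous_const.add continuous_id).tendsto 1
      · exact (continuous_const.add (continuous_const.mul continuous_id)).tendsto 1
      · exact hne
    rw [show (1+1:ℝ)/(1+α*1) = 2/(1+α) by norm_num] at ht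
    exact ht.mono_left nhdsWithin_le_nhds
  refine le_of_tendsto_of_tendsto h3 h2 ?_
  filter_upwards [self_mem_nhdsWithin] with r hr
  obtain ⟨hr0, hr1⟩ := hr
  have hrb : ((r:ℂ)*b) ∈ ball (0:ℂ) 1 := by
    rw [mem_ball, Complex.dist_eq, sub_zero, norm_mul, Complex.norm_real, Real.norm_eq_abs, hbmod, mul_one,
      abs_of_pos hr0]
    exact hr1
  have hk := hkey _ hrb
  have habs_rb : ‖(r:ℂ)*b‖ = r := by
    rw [norm_mul, Complex.norm_real, Real.norm_eq_abs, hbmod, mul_one, abs_of_pos hr0]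
  rw [habs_rb] at hk
  have hden2 : ‖(r:ℂ)*b - b‖ = 1 - r := by
    have e : (r:ℂ)*b - b = (((r-1:ℝ)):ℂ)*b := by push_cast; ring
    rw [e, norm_mul, hbmod, mul_one, Complex.norm_real, Real.norm_eq_abs, abs_of_neg (by linarith)]
    ring
  rw [norm_div, hden2]
  rw [div_le_div_iff₀ (by positivity) (by linarith)]
  have e1 : 1 - ‖f ((r:ℂ)*b)‖ ≤ ‖f ((r:ℂ)*b) - f b‖ := by
    have h5 := norm_sub_norm_le (f b) (f ((r:ℂ)*b))
    rw [norm_sub_rev, hfb] at h5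
    exact h5
  have hpos : (0:ℝ) ≤ 1 + α*r := by positivity
  nlinarith [hk, mul_le_mul_of_nonneg_right e1 hpos]
end

section
/- Under hypotheses (a)–(d), the derivative of f at the boundary point b satisfies |f'(b)| ≥ 1. -/
open Complex Filter

/-- Under hypotheses (a)–(d) of the boundary Schwarz Lemma, `|f'(b)| ≥ 1`. -/
theorem boundary_schwarz_ge_one
    (f : ℂ → ℂ) (b fb' : ℂ)
    (ha : DifferentiableOn ℂ f {z : ℂ | ‖z‖ < 1})
    (hb : ∀ z : ℂ, ‖z‖ < 1 → ‖f z‖ < 1)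
    (hc : f 0 = 0)
    (hbmod : ‖b‖ = 1)
    (hcont : ContinuousWithinAt f ({z : ℂ | ‖z‖ < 1} ∪ {b}) b)
    (hfb : ‖f b‖ = 1)
    (hderiv : Tendsto (fun z => (f z - f b) / (z - b))
      (nhdsWithin b {z : ℂ | ‖z‖ < 1}) (nhds fb')) :
    1 ≤ ‖fb'‖ := by
  have hset : {z : ℂ | ‖z‖ < 1} = Metric.ball (0 : ℂ) 1 := by
    ext z; simp [Complex.dist_eq]
  -- Schwarz lemma
  have hschwarz : ∀ z : ℂ, ‖z‖ < 1 → ‖f z‖ ≤ ‖z‖ := by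
    intro z hz
    apply Complex.norm_le_norm_of_mapsTo_ball (hset ▸ ha) _ hc (by simpa using hz)
    intro w hw
    rw [Metric.mem_ball, dist_zero_right] at hw
    rw [Metric.mem_closedBall, dist_zero_right]
    exact (hb w (by simpa using hw)).le
  -- the path r ↦ r • b along (0,1)
  have hpath : Tendsto (fun r : ℝ => (r : ℂ) * b) (nhdsWithin 1 (Set.Ioo 0 1))
      (nhdsWithin b {z : ℂ | ‖z‖ < 1}) := by
    apply tendsto_nhdsWithin_of_tendsto_nhds_of_eventually_within
    · have : Tendsto (fun r : ℝ => (r : ℂ) * b) (nhds 1) (nhds b) :=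
        Continuous.tendsto' (by continuity) 1 b (by simp)
      exact this.mono_left nhdsWithin_le_nhds
    · filter_upwards [self_mem_nhdsWithin] with r hr
      simp only [Set.mem_setOf_eq, norm_mul, hbmod, mul_one, Complex.norm_real, Real.norm_eq_abs]
      rw [abs_of_pos hr.1]
      exact hr.2
  have hne : (nhdsWithin (1:ℝ) (Set.Ioo 0 1)).NeBot :=
    right_nhdsWithin_Ioo_neBot (by norm_num)
  have htend : Tendsto (fun r : ℝ =>
      ‖(f ((r : ℂ) * b) - f b) / ((r : ℂ) * b - b)‖)
      (nhdsWithin 1 (Set.Ioo 0 1)) (nhds ‖fb'‖) :=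
    (continuous_norm.tendsto _).comp (hderiv.comp hpath)
  refine ge_of_tendsto htend ?_
  filter_upwards [self_mem_nhdsWithin] with r hr
  obtain ⟨hr0, hr1⟩ := hr
  have hzb : ‖(r : ℂ) * b‖ < 1 := by
    simp only [norm_mul, hbmod, mul_one, Complex.norm_real, Real.norm_eq_abs]
    rwa [abs_of_pos hr0]
  have hden : ‖(r : ℂ) * b - b‖ = 1 - r := by
    have : (r : ℂ) * b - b = ((r : ℝ) - 1 : ℂ) * b := by push_cast; ring
    rw [this, norm_mul, hbmod, mul_one]
    rw [show ((r : ℝ) - 1 : ℂ) = ((r - 1 : ℝ) : ℂ) by push_cast; ring]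
    rw [Complex.norm_real, Real.norm_eq_abs, abs_of_neg (by linarith)]
    ring
  have hnum : 1 - r ≤ ‖f ((r : ℂ) * b) - f b‖ := by
    have h1 : ‖f b‖ - ‖f ((r : ℂ) * b)‖ ≤
        ‖f ((r : ℂ) * b) - f b‖ := by
      have := norm_sub_norm_le (f b) (f ((r : ℂ) * b))
      calc ‖f b‖ - ‖f ((r : ℂ) * b)‖
          ≤ ‖f b - f ((r : ℂ) * b)‖ := this
        _ = ‖f ((r : ℂ) * b) - f b‖ := norm_sub_rev _ _
    have h2 : ‖f ((r : ℂ) * b)‖ ≤ r := by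
      have := hschwarz _ hzb
      simpa only [norm_mul, hbmod, mul_one, Complex.norm_real, Real.norm_eq_abs, abs_of_pos hr0] using this
    linarith [hfb ▸ h1]
  rw [norm_div, hden, le_div_iff₀ (by linarith), one_mul]
  exact hnum
end

section
/- Under hypotheses (a)–(d), |f'(b)| > 1 unless f is a rotation, i.e., unless f(z) = e^{iα} z on D for some real α. -/
open Complex Filter
open Metric Set

lemma mob_normSq_sub (a w : ℂ) :
    Complex.normSq (1 - (starRingEnd ℂ) a * w) - Complex.normSq (w - a)
      = (1 - Complex.normSq a) * (1 - Complex.normSq w) := by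
  simp only [Complex.normSq_apply, Complex.sub_re, Complex.sub_im, Complex.mul_re, Complex.mul_im,
    Complex.conj_re, Complex.conj_im, Complex.one_re, Complex.one_im]
  ring

lemma mob_normSq_add (a w : ℂ) :
    Complex.normSq (1 + (starRingEnd ℂ) a * w) - Complex.normSq (w + a)
      = (1 - Complex.normSq a) * (1 - Complex.normSq w) := by
  simp only [Complex.normSq_apply, Complex.add_re, Complex.add_im, Complex.mul_re, Complex.mul_im,
    Complex.conj_re, Complex.conj_im, Complex.one_re, Complex.one_im]
  ring

lemma mob_lt {a w : ℂ} (haa : ‖a‖ < 1) (hw : ‖w‖ < 1) :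
    ‖(w - a) / (1 - (starRingEnd ℂ) a * w)‖ < 1 := by
  have hd : ‖(starRingEnd ℂ) a * w‖ < 1 := by
    rw [norm_mul, Complex.norm_conj]
    calc ‖a‖ * ‖w‖ ≤ ‖a‖ * 1 :=
          mul_le_mul_of_nonneg_left hw.le (norm_nonneg a)
      _ < 1 := by simpa using haa
  have hd0 : (1 : ℂ) - (starRingEnd ℂ) a * w ≠ 0 := by
    intro h
    have : (1 : ℂ) = (starRingEnd ℂ) a * w := by linear_combination h
    rw [← this] at hd
    simp at hd
  rw [norm_div, div_lt_one (norm_pos_iff.mpr hd0)]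
  have hsq : Complex.normSq (w - a) < Complex.normSq (1 - (starRingEnd ℂ) a * w) := by
    have h1 : Complex.normSq a < 1 := by
      rw [← Complex.sq_norm]; nlinarith [norm_nonneg a]
    have h2 : Complex.normSq w < 1 := by
      rw [← Complex.sq_norm]; nlinarith [norm_nonneg w]
    nlinarith [mob_normSq_sub a w]
  have := Real.sqrt_lt_sqrt (Complex.normSq_nonneg _) hsq
  simpa [Complex.norm_def] using this

lemma key_real' (A W u v k : ℝ) (hA0 : 0 ≤ A) (hA : A < 1) (hW0 : 0 ≤ W) (hW1 : W ≤ 1)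
    (hu : 0 ≤ u) (hv : 0 < v) (hvle : v ≤ 1 + A * W)
    (hid : u ^ 2 = v ^ 2 - (1 - A ^ 2) * (1 - W ^ 2))
    (hk0 : 0 ≤ k) (hk1 : k ≤ 1 / 2)
    (hkid : 2 * (1 + A) ^ 2 * k ≤ (1 - A ^ 2) * (1 - W ^ 2)) :
    u / v ≤ 1 - k := by
  have hvk : 0 ≤ v * (1 - k) := by nlinarith
  have hvle2 : v ≤ 1 + A := by nlinarith
  have hv2 : v ^ 2 ≤ (1 + A) ^ 2 := by nlinarith
  have h2k : 2 * v ^ 2 * k ≤ (1 - A ^ 2) * (1 - W ^ 2) := by nlinarith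
  have husq : u ^ 2 ≤ (v * (1 - k)) ^ 2 := by nlinarith [sq_nonneg (v * k)]
  have hule : u ≤ v * (1 - k) := by nlinarith [mul_nonneg hu hvk]
  rw [div_le_iff₀ hv]
  nlinarith

lemma key_real (A W t u v : ℝ) (hA0 : 0 ≤ A) (hA : A < 1) (hW0 : 0 ≤ W) (hWt : W ≤ t)
    (ht : t < 1) (hu : 0 ≤ u) (hv : 0 < v) (hvle : v ≤ 1 + A * W)
    (hid : u ^ 2 = v ^ 2 - (1 - A ^ 2) * (1 - W ^ 2)) :
    u / v ≤ 1 - (1 - A) * (1 - t ^ 2) / (2 * (1 + A)) := by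
  have ht0 : 0 ≤ t := hW0.trans hWt
  have ht2 : t ^ 2 ≤ 1 := by nlinarith
  have hW1 : W ≤ 1 := by linarith
  have hWt2 : W ^ 2 ≤ t ^ 2 := by nlinarith
  have hA1 : (0:ℝ) < 1 + A := by linarith
  refine key_real' A W u v _ hA0 hA hW0 hW1 hu hv hvle hid ?_ ?_ ?_
  · apply div_nonneg (by nlinarith) (by linarith)
  · rw [div_le_div_iff₀ (by linarith) (by norm_num)]
    nlinarith
  · have h1 : 2 * (1 + A) ^ 2 * ((1 - A) * (1 - t ^ 2) / (2 * (1 + A)))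
        = (1 - A ^ 2) * (1 - t ^ 2) := by field_simp; ring
    rw [h1]
    have h2 : (1:ℝ) - t ^ 2 ≤ 1 - W ^ 2 := by linarith
    have h3 : (0:ℝ) ≤ 1 - A ^ 2 := by nlinarith
    exact mul_le_mul_of_nonneg_left h2 h3

lemma one_add_ne {x : ℂ} (hx : ‖x‖ < 1) : (1 : ℂ) + x ≠ 0 := by
  intro h
  have hx1 : x = -1 := by linear_combination h
  rw [hx1] at hx
  simp at hx

lemma one_sub_ne {x : ℂ} (hx : ‖x‖ < 1) : (1 : ℂ) - x ≠ 0 := by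
  intro h
  have hx1 : x = 1 := by linear_combination -h
  rw [hx1] at hx
  simp at hx

/-- Under hypotheses (a)–(d) of the boundary Schwarz Lemma, `|f'(b)| > 1`
unless `f` is a rotation `f z = e^{iα} z` on the unit disk. -/
theorem boundary_schwarz_gt_one_unless_rotation
    (f : ℂ → ℂ) (b fb' : ℂ)
    (ha : DifferentiableOn ℂ f {z : ℂ | ‖z‖ < 1})
    (hb : ∀ z : ℂ, ‖z‖ < 1 → ‖f z‖ < 1)
    (hc : f 0 = 0)
    (hbmod : ‖b‖ = 1)
    (hcont : ContinuousWithinAt f ({z : ℂ | ‖z‖ < 1} ∪ {b}) b)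
    (hfb : ‖f b‖ = 1)
    (hderiv : Tendsto (fun z => (f z - f b) / (z - b))
      (nhdsWithin b {z : ℂ | ‖z‖ < 1}) (nhds fb'))
    (hnotrot : ¬ ∃ α : ℝ, ∀ z : ℂ, ‖z‖ < 1 →
      f z = Complex.exp (α * Complex.I) * z) :
    1 < ‖fb'‖ := by
  have hset : {z : ℂ | ‖z‖ < 1} = Metric.ball (0 : ℂ) 1 := by
    ext z; simp [Metric.mem_ball, Complex.dist_eq]
  rw [hset] at ha hderiv
  have h_maps : Set.MapsTo f (ball 0 1) (ball (f 0) 1) := by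
    intro z hz
    rw [hc]
    simpa [Metric.mem_ball, Complex.dist_eq] using
      hb z (by simpa [Metric.mem_ball, Complex.dist_eq] using hz)
  set g : ℂ → ℂ := dslope f 0 with hg
  have hfzg : ∀ z : ℂ, f z = z * g z := by
    intro z
    rcases eq_or_ne z 0 with rfl | hz
    · simp [hc]
    · rw [hg, dslope_of_ne _ hz, slope_def_field, hc]
      field_simp
      ring
  have hg_le : ∀ z ∈ ball (0 : ℂ) 1, ‖g z‖ ≤ 1 := by
    intro z hz
    simpa using Complex.norm_dslope_le_div_of_mapsTo_ball ha (h_maps.mono_right ball_subset_closedBall) hz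
  have hg_lt : ∀ z ∈ ball (0 : ℂ) 1, ‖g z‖ < 1 := by
    intro z hz
    refine lt_of_le_of_ne (hg_le z hz) ?_
    intro heq
    apply hnotrot
    have haff := Complex.affine_of_mapsTo_ball_of_exists_norm_dslope_eq_div ha (h_maps.mono_right ball_subset_closedBall) hz
      (by simpa [hg] using heq)
    have h3 : Complex.exp ((Complex.arg (g z) : ℂ) * Complex.I) = g z := by
      have h4 := Complex.norm_mul_exp_arg_mul_I (g z)
      rw [heq] at h4
      simpa using h4
    refine ⟨Complex.arg (g z), fun w hw => ?_⟩
    have hw' : w ∈ ball (0 : ℂ) 1 := by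
      simpa [Metric.mem_ball, Complex.dist_eq] using hw
    have h2 := haff hw'
    rw [h3]
    simpa [hc, smul_eq_mul, mul_comm] using h2
  have hg_diff : DifferentiableOn ℂ g (ball 0 1) :=
    (differentiableOn_dslope (isOpen_ball.mem_nhds (mem_ball_self one_pos))).mpr ha
  set a : ℂ := g 0 with ha_def
  have hA : ‖a‖ < 1 := hg_lt 0 (mem_ball_self one_pos)
  have hA0 : 0 ≤ ‖a‖ := norm_nonneg a
  set F : ℂ → ℂ := fun z => (g z - a) / (1 - (starRingEnd ℂ) a * g z) with hF_def
  have hden : ∀ z ∈ ball (0 : ℂ) 1, (1 : ℂ) - (starRingEnd ℂ) a * g z ≠ 0 := by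
    intro z hz
    apply one_sub_ne
    rw [norm_mul, Complex.norm_conj]
    calc ‖a‖ * ‖g z‖ ≤ ‖a‖ * 1 :=
          mul_le_mul_of_nonneg_left (hg_le z hz) hA0
      _ < 1 := by simpa using hA
  have hF_diff : DifferentiableOn ℂ F (ball 0 1) := by
    apply DifferentiableOn.div (hg_diff.sub (differentiableOn_const a))
      ((differentiableOn_const 1).sub ((differentiableOn_const _).mul hg_diff)) hden
  have hF0 : F 0 = 0 := by simp [hF_def, ha_def]
  have hF_lt : ∀ z ∈ ball (0 : ℂ) 1, ‖F z‖ < 1 := by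
    intro z hz
    exact mob_lt hA (hg_lt z hz)
  have hF_maps : Set.MapsTo F (ball 0 1) (ball (F 0) 1) := by
    intro z hz
    rw [hF0]
    simpa [Metric.mem_ball, Complex.dist_eq] using hF_lt z hz
  have hF_le : ∀ z : ℂ, ‖z‖ < 1 → ‖F z‖ ≤ ‖z‖ := by
    intro z hz
    exact Complex.norm_le_norm_of_mapsTo_ball hF_diff
        (by rw [hF0] at hF_maps; exact hF_maps.mono_right ball_subset_closedBall) hF0 hz
  -- the key pointwise bound on |g|
  have hGb : ∀ z ∈ ball (0 : ℂ) 1, ‖g z‖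
      ≤ 1 - (1 - ‖a‖) * (1 - (‖z‖) ^ 2) / (2 * (1 + ‖a‖)) := by
    intro z hz
    have hz1 : ‖z‖ < 1 := by simpa [Metric.mem_ball, Complex.dist_eq] using hz
    set w : ℂ := F z with hw_def
    have hW : ‖w‖ ≤ ‖z‖ := hF_le z hz1
    have hW1 : ‖w‖ < 1 := lt_of_le_of_lt hW hz1
    have hv0 : (1 : ℂ) + (starRingEnd ℂ) a * w ≠ 0 := by
      apply one_add_ne
      rw [norm_mul, Complex.norm_conj]
      calc ‖a‖ * ‖w‖ ≤ ‖a‖ * 1 :=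
            mul_le_mul_of_nonneg_left hW1.le hA0
        _ < 1 := by simpa using hA
    have hd0 : (1 : ℂ) - (starRingEnd ℂ) a * g z ≠ 0 := hden z hz
    have heqm : g z * (1 + (starRingEnd ℂ) a * w) = w + a := by
      have hq : F z * (1 - (starRingEnd ℂ) a * g z) = g z - a := by
        show (g z - a) / (1 - (starRingEnd ℂ) a * g z) * _ = _
        exact div_mul_cancel₀ _ hd0
      rw [hw_def]
      linear_combination -hq
    have habsg : ‖g z‖
        = ‖w + a‖ / ‖1 + (starRingEnd ℂ) a * w‖ := by
      rw [← norm_div]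
      congr 1
      rw [eq_div_iff hv0]
      exact heqm
    rw [habsg]
    have hvle : ‖1 + (starRingEnd ℂ) a * w‖
        ≤ 1 + ‖a‖ * ‖w‖ := by
      calc ‖1 + (starRingEnd ℂ) a * w‖
          ≤ ‖1‖ + ‖(starRingEnd ℂ) a * w‖ := norm_add_le _ _
        _ = 1 + ‖a‖ * ‖w‖ := by rw [norm_one, norm_mul, Complex.norm_conj]
    have hid : (‖w + a‖) ^ 2 = (‖1 + (starRingEnd ℂ) a * w‖) ^ 2
        - (1 - (‖a‖) ^ 2) * (1 - (‖w‖) ^ 2) := by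
      rw [Complex.sq_norm, Complex.sq_norm, Complex.sq_norm, Complex.sq_norm]
      linarith [mob_normSq_add a w]
    exact key_real (‖a‖) (‖w‖) (‖z‖) _ _ hA0 hA
      (norm_nonneg w) hW hz1 (norm_nonneg _) (norm_pos_iff.mpr hv0) hvle hid
  -- radial limit argument
  set A : ℝ := ‖a‖ with hA_def
  set φ : ℝ → ℝ := fun r => 1 + r * (1 - A) * (1 + r) / (2 * (1 + A)) with hφ_def
  have hA1 : (0:ℝ) < 1 + A := by linarith
  have htend1 : Tendsto (fun r : ℝ => (r : ℂ) * b) (nhdsWithin 1 (Set.Ioo (0:ℝ) 1))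
      (nhdsWithin b (ball 0 1)) := by
    apply tendsto_nhdsWithin_of_tendsto_nhds_of_eventually_within
    · have hco : Continuous fun r : ℝ => (r : ℂ) * b :=
        (Complex.continuous_ofReal.mul continuous_const)
      have := hco.tendsto 1
      simp only [Complex.ofReal_one, one_mul] at this
      exact this.mono_left nhdsWithin_le_nhds
    · filter_upwards [self_mem_nhdsWithin] with r hr
      have : ‖(r : ℂ) * b‖ = r := by
        rw [norm_mul, Complex.norm_real, Real.norm_eq_abs, hbmod, mul_one, abs_of_pos hr.1]
      rw [mem_ball_zero_iff, this]
      exact hr.2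
  haveI : (nhdsWithin (1:ℝ) (Set.Ioo (0:ℝ) 1)).NeBot :=
    right_nhdsWithin_Ioo_neBot (by norm_num)
  have htendA : Tendsto (fun r : ℝ => ‖(f ((r:ℂ) * b) - f b) / ((r:ℂ) * b - b)‖)
      (nhdsWithin 1 (Set.Ioo (0:ℝ) 1)) (nhds (‖fb'‖)) :=
    (continuous_norm.tendsto fb').comp (hderiv.comp htend1)
  have htendφ : Tendsto φ (nhdsWithin 1 (Set.Ioo (0:ℝ) 1)) (nhds (φ 1)) := by
    have hco : Continuous φ := by
      rw [hφ_def]; fun_prop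
    exact (hco.tendsto 1).mono_left nhdsWithin_le_nhds
  have hineq : ∀ r ∈ Set.Ioo (0:ℝ) 1,
      φ r ≤ ‖(f ((r:ℂ) * b) - f b) / ((r:ℂ) * b - b)‖ := by
    intro r hr
    set z : ℂ := (r : ℂ) * b with hz_def
    have habsz : ‖z‖ = r := by
      rw [hz_def, norm_mul, Complex.norm_real, Real.norm_eq_abs, hbmod, mul_one, abs_of_pos hr.1]
    have hz1 : ‖z‖ < 1 := by rw [habsz]; exact hr.2
    have hzball : z ∈ ball (0:ℂ) 1 := by
      simpa [Metric.mem_ball, Complex.dist_eq] using hz1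
    have hzb : ‖z - b‖ = 1 - r := by
      have : z - b = ((r - 1 : ℝ) : ℂ) * b := by rw [hz_def]; push_cast; ring
      rw [this, norm_mul, Complex.norm_real, Real.norm_eq_abs, hbmod, mul_one, abs_of_neg (by linarith)]
      ring
    have hfzle : ‖f z‖ ≤ r * (1 - (1 - A) * (1 - r ^ 2) / (2 * (1 + A))) := by
      have h1 : ‖f z‖ = ‖z‖ * ‖g z‖ := by
        rw [hfzg z, norm_mul]
      rw [h1, habsz]
      apply mul_le_mul_of_nonneg_left _ hr.1.le
      have := hGb z hzball
      rwa [habsz] at this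
    have hlow : 1 - ‖f z‖ ≤ ‖f z - f b‖ := by
      have h1 : ‖f b‖ - ‖f z‖ ≤ ‖f b - f z‖ := by
        simpa using norm_sub_norm_le (f b) (f z)
      rw [hfb] at h1
      rwa [norm_sub_rev] at h1
    rw [norm_div, hzb, le_div_iff₀ (by linarith : (0:ℝ) < 1 - r)]
    have hkey : φ r * (1 - r) = 1 - r * (1 - (1 - A) * (1 - r ^ 2) / (2 * (1 + A))) := by
      rw [hφ_def]
      field_simp
      ring
    rw [hkey]
    linarith
  have hle : φ 1 ≤ ‖fb'‖ :=
    le_of_tendsto_of_tendsto htendφ htendA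
      (eventually_nhdsWithin_of_forall hineq)
  have hφ1 : 1 < φ 1 := by
    rw [hφ_def]
    have : (0:ℝ) < 1 * (1 - A) * (1 + 1) / (2 * (1 + A)) := by
      apply div_pos (by nlinarith) (by linarith)
    simpa using this
  linarith
end

section
/- (Interior Schwarz Lemma) Suppose f satisfies (a), (b), (c). Then for every z with |z| < 1, |f(z)| ≤ |z| · (|z| + |f'(0)|)/(1 + |f'(0)| |z|). -/
open Complex Metric Set

lemma isl_normSq_diff (u a : ℂ) : Complex.normSq (1 - (starRingEnd ℂ) a * u) - Complex.normSq (u - a)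
    = (1 - Complex.normSq a) * (1 - Complex.normSq u) := by
  simp [Complex.normSq_apply, Complex.mul_re, Complex.mul_im]
  ring

lemma isl_normSq_sub (u a : ℂ) : Complex.normSq (u - a)
    = Complex.normSq u + Complex.normSq a - 2 * ((starRingEnd ℂ) a * u).re := by
  simp [Complex.normSq_apply, Complex.mul_re, Complex.mul_im]; ring

lemma isl_normSq_den (u a : ℂ) : Complex.normSq (1 - (starRingEnd ℂ) a * u)
    = 1 + Complex.normSq a * Complex.normSq u - 2 * ((starRingEnd ℂ) a * u).re := by
  simp [Complex.normSq_apply, Complex.mul_re, Complex.mul_im]; ring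

lemma isl_poly (G A r : ℝ) (hG0 : 0 ≤ G) (hA0 : 0 ≤ A) (hr0 : 0 ≤ r)
    (hG1 : G ≤ 1) (hA1 : A ≤ 1) (hr1 : r < 1) (hs : ∃ s : ℝ, s ≤ A * G ∧
      G^2 + A^2 - 2*s ≤ r^2 * (1 + A^2*G^2 - 2*s)) :
    G * (1 + A*r) ≤ r + A := by
  obtain ⟨s, hs1, hs2⟩ := hs
  have h1 : (0:ℝ) ≤ 1 - r^2 := by nlinarith
  have hQ : (G*(1+A*r)-(A+r))*(G*(1-A*r)-(A-r)) ≤ 0 := by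
    nlinarith [mul_nonneg h1 (sub_nonneg.2 hs1)]
  nlinarith [mul_nonneg hr0 (sub_nonneg.2 (mul_le_one₀ hA1 hG0 hG1)), hQ]

/-- **Interior Schwarz Lemma.** If `f` is holomorphic on the unit disk, maps it into
itself, and `f 0 = 0`, then `|f z| ≤ |z| (|z| + |f'(0)|) / (1 + |f'(0)| |z|)`. -/
theorem interior_schwarz_lemma
    (f : ℂ → ℂ)
    (ha : DifferentiableOn ℂ f {z : ℂ | ‖z‖ < 1})
    (hb : ∀ z : ℂ, ‖z‖ < 1 → ‖f z‖ < 1)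
    (hc : f 0 = 0) :
    ∀ z : ℂ, ‖z‖ < 1 →
      ‖f z‖ ≤ ‖z‖ *
        ((‖z‖ + ‖deriv f 0‖) /
          (1 + ‖deriv f 0‖ * ‖z‖)) := by
  have hset : {z : ℂ | ‖z‖ < 1} = Metric.ball (0:ℂ) 1 := by
    ext w; simp [Metric.mem_ball, Complex.dist_eq]
  rw [hset] at ha
  have hmaps : Set.MapsTo f (Metric.ball 0 1) (Metric.ball (f 0) 1) := by
    rw [hc]
    intro w hw
    rw [mem_ball_zero_iff] at hw ⊢
    exact hb w hw
  set g := dslope f 0 with hgdef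
  have hgd : DifferentiableOn ℂ g (ball 0 1) :=
    (differentiableOn_dslope (isOpen_ball.mem_nhds (mem_ball_self one_pos))).mpr ha
  have hg0 : g 0 = deriv f 0 := dslope_same f 0
  have hgz : ∀ w : ℂ, w ≠ 0 → g w = f w / w := by
    intro w hw
    rw [hgdef, dslope_of_ne _ hw, slope_def_field]
    simp [hc]
  have hgle : ∀ w ∈ ball (0:ℂ) 1, ‖g w‖ ≤ 1 := by
    intro w hw
    have := Complex.norm_dslope_le_div_of_mapsTo_ball ha (hmaps.mono_right ball_subset_closedBall) hw
    simpa using this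
  set A := ‖deriv f 0‖ with hAdef
  have hA0 : 0 ≤ A := norm_nonneg _
  have hA1 : A ≤ 1 := by
    have := hgle 0 (mem_ball_self one_pos)
    rwa [hg0] at this
  intro z hz
  rcases eq_or_ne z 0 with rfl | hz0
  · simp [hc]
  have hzball : z ∈ ball (0:ℂ) 1 := mem_ball_zero_iff.2 hz
  set r := ‖z‖ with hrdef
  have hr0 : 0 ≤ r := norm_nonneg _
  have hpos : 0 < 1 + A * r := by nlinarith
  have hfz : ‖f z‖ = ‖g z‖ * r := by
    rw [hgz z hz0, norm_div]
    field_simp [hz0]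
    rfl
  -- reduce to a bound on |g z|
  suffices hG : ‖g z‖ ≤ (r + A) / (1 + A * r) by
    rw [hfz, mul_comm]
    exact mul_le_mul_of_nonneg_left hG hr0
  rcases eq_or_lt_of_le hA1 with hAeq | hAlt
  · -- |f'(0)| = 1 : g is constant by maximum modulus
    have hmax : IsMaxOn (norm ∘ g) (ball (0:ℂ) 1) 0 := by
      intro x hx
      simp only [Function.comp_apply, hg0, Set.mem_setOf_eq]
      calc ‖g x‖ ≤ 1 := hgle x hx
        _ = A := hAeq.symm
    have heq := Complex.eqOn_of_isPreconnected_of_isMaxOn_norm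
      (convex_ball (0:ℂ) 1).isPreconnected isOpen_ball hgd (mem_ball_self one_pos) hmax hzball
    simp only [Function.const_apply] at heq
    rw [heq, hg0, ← hAdef, hAeq, le_div_iff₀ (by nlinarith : (0:ℝ) < 1 + 1*r)]
    nlinarith
  · -- |f'(0)| < 1
    set a := deriv f 0 with hadef
    have hglt : ∀ w ∈ ball (0:ℂ) 1, ‖g w‖ < 1 := by
      intro w hw
      refine lt_of_le_of_ne (hgle w hw) fun heq => ?_
      have hmax : IsMaxOn (norm ∘ g) (ball (0:ℂ) 1) w := by
        intro x hx
        simp only [Function.comp_apply, Set.mem_setOf_eq, heq]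
        exact hgle x hx
      have h00 := Complex.eqOn_of_isPreconnected_of_isMaxOn_norm
        (convex_ball (0:ℂ) 1).isPreconnected isOpen_ball hgd hw hmax (mem_ball_self one_pos)
      simp only [Function.const_apply] at h00
      have : A = 1 := by rw [hAdef, ← hg0, h00, heq]
      exact absurd this hAlt.ne
    have hden : ∀ w ∈ ball (0:ℂ) 1, 1 - (starRingEnd ℂ) a * g w ≠ 0 := by
      intro w hw h0
      have h1 : (starRingEnd ℂ) a * g w = 1 := by
        have := sub_eq_zero.1 h0; linear_combination -this
      have h2 : ‖(starRingEnd ℂ) a * g w‖ < 1 := by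
        rw [norm_mul, Complex.norm_conj]
        calc A * ‖g w‖ ≤ A * 1 :=
              mul_le_mul_of_nonneg_left (hgle w hw) hA0
          _ < 1 := by nlinarith
      rw [h1] at h2; simp at h2
    set h : ℂ → ℂ := fun w => (g w - a) / (1 - (starRingEnd ℂ) a * g w) with hhdef
    have hhd : DifferentiableOn ℂ h (ball (0:ℂ) 1) := by
      apply DifferentiableOn.div (hgd.sub (differentiableOn_const a))
        ((differentiableOn_const 1).sub ((differentiableOn_const _).mul hgd)) hden
    have hhmaps : Set.MapsTo h (ball (0:ℂ) 1) (ball (0:ℂ) 1) := by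
      intro w hw
      rw [mem_ball_zero_iff, hhdef]
      have hlt : Complex.normSq (g w - a) < Complex.normSq (1 - (starRingEnd ℂ) a * g w) := by
        have key := isl_normSq_diff (g w) a
        have h1 : Complex.normSq a < 1 := by
          rw [← Complex.sq_norm]; nlinarith
        have h2 : Complex.normSq (g w) < 1 := by
          rw [← Complex.sq_norm]
          have := hglt w hw
          nlinarith [norm_nonneg (g w)]
        nlinarith
      have habslt : ‖g w - a‖ < ‖1 - (starRingEnd ℂ) a * g w‖ := by
        rw [Complex.norm_def, Complex.norm_def]
        exact Real.sqrt_lt_sqrt (Complex.normSq_nonneg _) hlt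
      rw [norm_div, div_lt_one]
      · exact habslt
      · exact lt_of_le_of_lt (norm_nonneg _) habslt
    have hh0 : h 0 = 0 := by
      simp [hhdef, hg0, ← hadef]
    have hschwarz : ‖h z‖ ≤ ‖z‖ :=
      Complex.norm_le_norm_of_mapsTo_ball hhd (hhmaps.mono_right ball_subset_closedBall) hh0 hz
    have habs : ‖g z - a‖ ≤ r * ‖1 - (starRingEnd ℂ) a * g z‖ := by
      have hd0 : ‖1 - (starRingEnd ℂ) a * g z‖ ≠ 0 :=
        norm_ne_zero_iff.mpr (hden z hzball)
      rw [hhdef] at hschwarz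
      simp only [norm_div] at hschwarz
      rw [div_le_iff₀ (lt_of_le_of_ne (norm_nonneg _) (Ne.symm hd0))] at hschwarz
      rw [hrdef]
      exact hschwarz
    -- square and conclude via the polynomial lemma
    set G := ‖g z‖ with hGdef
    have hG0 : 0 ≤ G := norm_nonneg _
    have hG1 : G ≤ 1 := hgle z hzball
    have hkey : G * (1 + A * r) ≤ r + A := by
      apply isl_poly G A r hG0 hA0 hr0 hG1 hA1 hz
      refine ⟨((starRingEnd ℂ) a * g z).re, ?_, ?_⟩
      · calc ((starRingEnd ℂ) a * g z).re ≤ ‖(starRingEnd ℂ) a * g z‖ :=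
              Complex.re_le_norm _
          _ = A * G := by rw [norm_mul, Complex.norm_conj]
      · have hsq : Complex.normSq (g z - a) ≤
            r^2 * Complex.normSq (1 - (starRingEnd ℂ) a * g z) := by
          rw [← Complex.sq_norm (g z - a), ← Complex.sq_norm (1 - (starRingEnd ℂ) a * g z)]
          nlinarith [habs, norm_nonneg (g z - a),
            mul_nonneg hr0 (norm_nonneg (1 - (starRingEnd ℂ) a * g z))]
        have e1 := isl_normSq_sub (g z) a
        have e2 := isl_normSq_den (g z) a
        have eG : Complex.normSq (g z) = G^2 := (Complex.sq_norm _).symm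
        have eA : Complex.normSq a = A^2 := (Complex.sq_norm _).symm
        rw [e1, e2, eG, eA] at hsq
        linarith
    rw [le_div_iff₀ hpos]
    nlinarith [hkey]
end

section
/- Suppose f satisfies (a), (b), (c). Then for every z with |z| < 1, (1 − |f(z)|)/(1 − |z|) ≥ (1 + |z|)/(1 + |f'(0)| |z|). -/
open Complex Metric

/-- Auxiliary: `|u - v| ≤ |1 - conj v * u|` when `|u| ≤ 1`, `|v| ≤ 1`. -/
lemma aux_abs_sub_le (u v : ℂ) (hu : ‖u‖ ≤ 1) (hv : ‖v‖ ≤ 1) :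
    ‖u - v‖ ≤ ‖1 - (starRingEnd ℂ) v * u‖ := by
  have hu' : Complex.normSq u ≤ 1 := by
    rw [← Complex.sq_norm]; nlinarith [norm_nonneg u]
  have hv' : Complex.normSq v ≤ 1 := by
    rw [← Complex.sq_norm]; nlinarith [norm_nonneg v]
  rw [Complex.norm_def, Complex.norm_def]
  apply Real.sqrt_le_sqrt
  have : Complex.normSq (1 - (starRingEnd ℂ) v * u) - Complex.normSq (u - v)
      = (1 - Complex.normSq u) * (1 - Complex.normSq v) := by
    simp [Complex.normSq_apply, Complex.sub_re, Complex.sub_im, Complex.mul_re, Complex.mul_im]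
    ring
  nlinarith [this]

set_option maxHeartbeats 1000000 in
/-- If `f` is holomorphic on the unit disk, maps it into itself, and `f 0 = 0`, then
`(1 - |f z|) / (1 - |z|) ≥ (1 + |z|) / (1 + |f'(0)| |z|)` for `|z| < 1`. -/
theorem schwarz_ratio_bound
    (f : ℂ → ℂ)
    (ha : DifferentiableOn ℂ f {z : ℂ | ‖z‖ < 1})
    (hb : ∀ z : ℂ, ‖z‖ < 1 → ‖f z‖ < 1)
    (hc : f 0 = 0) :
    ∀ z : ℂ, ‖z‖ < 1 →
      (1 + ‖z‖) / (1 + ‖deriv f 0‖ * ‖z‖) ≤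
        (1 - ‖f z‖) / (1 - ‖z‖) := by
  intro z hz
  have hset : {z : ℂ | ‖z‖ < 1} = ball (0 : ℂ) 1 := by
    ext w; simp [mem_ball_zero_iff]
  rw [hset] at ha
  have hmaps : Set.MapsTo f (ball (0 : ℂ) 1) (ball (f 0) 1) := by
    intro w hw
    rw [hc, mem_ball_zero_iff]
    exact hb w (by simpa [mem_ball_zero_iff] using hw)
  -- the dslope function g with g 0 = deriv f 0, f w = w * g w
  set g : ℂ → ℂ := dslope f 0 with hg
  have hgd : DifferentiableOn ℂ g (ball (0 : ℂ) 1) :=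
    (differentiableOn_dslope (ball_mem_nhds _ one_pos)).mpr ha
  have hg1 : ∀ w : ℂ, w ∈ ball (0 : ℂ) 1 → ‖g w‖ ≤ 1 := by
    intro w hw
    simpa using Complex.norm_dslope_le_div_of_mapsTo_ball ha (hmaps.mono_right ball_subset_closedBall) hw
  have hzball : z ∈ ball (0 : ℂ) 1 := by simpa [mem_ball_zero_iff] using hz
  have hg0 : g 0 = deriv f 0 := dslope_same f 0
  set b : ℂ := deriv f 0 with hb0
  set a : ℝ := ‖b‖ with ha0
  set r : ℝ := ‖z‖ with hr0
  have ha1 : a ≤ 1 := by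
    have := hg1 0 (mem_ball_self one_pos); rwa [hg0] at this
  have hann : 0 ≤ a := norm_nonneg b
  have hrnn : 0 ≤ r := norm_nonneg z
  have hr1 : r < 1 := hz
  have hd1 : (0:ℝ) < 1 + a * r := by nlinarith
  have hd2 : (0:ℝ) < 1 - r := by linarith
  rcases eq_or_ne z 0 with rfl | hzne
  · have h0 : r = 0 := by simp [hr0]
    simp [hc, h0]
  have hrpos : 0 < r := by
    simpa [hr0, norm_pos_iff] using hzne
  -- f z = z * g z
  have hfz : ‖f z‖ = r * ‖g z‖ := by
    have h1 : g z = slope f 0 z := dslope_of_ne f hzne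
    rw [slope_def_field, hc, sub_zero, sub_zero] at h1
    rw [h1, norm_div]
    field_simp [hr0]
    rw [hr0]
  set t : ℝ := ‖g z‖ with ht0
  have ht1 : t ≤ 1 := hg1 z hzball
  have htnn : 0 ≤ t := norm_nonneg _
  -- key: t * (1 + a * r) ≤ a + r
  have key : t * (1 + a * r) ≤ a + r := by
    rcases eq_or_lt_of_le ha1 with heq | halt
    · -- a = 1 : trivial since t ≤ 1
      nlinarith
    -- a < 1 : Schwarz–Pick via the Möbius transform
    set F : ℂ → ℂ := fun w => (g w - b) / (1 - (starRingEnd ℂ) b * g w) with hF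
    have hden : ∀ w : ℂ, w ∈ ball (0 : ℂ) 1 → (1 - (starRingEnd ℂ) b * g w) ≠ 0 := by
      intro w hw h0
      have : ‖(starRingEnd ℂ) b * g w‖ < 1 := by
        rw [norm_mul, Complex.norm_conj]
        calc a * ‖g w‖ ≤ a * 1 := by
              exact mul_le_mul_of_nonneg_left (hg1 w hw) hann
          _ < 1 := by nlinarith
      rw [sub_eq_zero] at h0
      rw [← h0] at this
      simp at this
    have hFd : DifferentiableOn ℂ F (ball (0 : ℂ) 1) := by
      apply DifferentiableOn.div
      · exact hgd.sub (differentiableOn_const b)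
      · exact (differentiableOn_const 1).sub ((differentiableOn_const _).mul hgd)
      · exact hden
    have hF0 : F 0 = 0 := by simp [hF, hg0]
    have hF1 : ∀ w : ℂ, w ∈ ball (0 : ℂ) 1 → ‖F w‖ ≤ 1 := by
      intro w hw
      rw [hF]
      simp only [norm_div]
      rw [div_le_one (by
        have := hden w hw
        simpa [norm_pos_iff] using this)]
      simpa using aux_abs_sub_le (g w) b (hg1 w hw) ha1
    -- |F z| ≤ |z| via Schwarz lemma with target radius 1 + ε
    have hFz : ‖F z‖ ≤ r := by
      have hεbound : ∀ ε : ℝ, 0 < ε → ‖F z‖ ≤ (1 + ε) * r := by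
        intro ε hε
        have hm : Set.MapsTo F (ball (0 : ℂ) 1) (ball (F 0) (1 + ε)) := by
          intro w hw
          rw [hF0, mem_ball_zero_iff]
          calc ‖F w‖ ≤ 1 := hF1 w hw
            _ < 1 + ε := by linarith
        have := Complex.dist_le_div_mul_dist_of_mapsTo_ball hFd (hm.mono_right ball_subset_closedBall) hzball
        rw [hF0] at this
        simpa [dist_zero_right, div_one, hr0] using this
      by_contra h
      push_neg at h
      have hε : 0 < (‖F z‖ - r) / (2 * r) := by
        apply div_pos (by linarith) (by linarith)
      have := hεbound _ hε
      have : ‖F z‖ ≤ r + (‖F z‖ - r) / 2 := by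
        rw [add_mul, one_mul] at this
        convert this using 2
        field_simp
      linarith
    -- turn |F z| ≤ r into the quadratic inequality
    have hdenpos : 0 < ‖1 - (starRingEnd ℂ) b * g z‖ := by
      have := hden z hzball
      simpa [norm_pos_iff] using this
    have hineq : ‖g z - b‖ ≤ r * ‖1 - (starRingEnd ℂ) b * g z‖ := by
      have := hFz
      rw [hF] at this
      simp only [norm_div] at this
      rwa [div_le_iff₀ hdenpos] at this
    -- square both sides and expand using normSq
    have hsq : Complex.normSq (g z - b) ≤ r ^ 2 * Complex.normSq (1 - (starRingEnd ℂ) b * g z) := by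
      rw [← Complex.sq_norm, ← Complex.sq_norm]
      nlinarith [norm_nonneg (g z - b), hineq, hdenpos.le]
    set s : ℝ := ((g z) * (starRingEnd ℂ) b).re with hs
    have habs_s : s ≤ a * t := by
      calc s ≤ ‖(g z) * (starRingEnd ℂ) b‖ := Complex.re_le_norm _
        _ = t * a := by rw [norm_mul, Complex.norm_conj]
        _ = a * t := by ring
    have e1 : Complex.normSq (g z - b)
        = Complex.normSq (g z) - 2 * s + Complex.normSq b := by
      simp only [hs, Complex.normSq_apply, Complex.sub_re, Complex.sub_im, Complex.mul_re,
        Complex.mul_im, Complex.conj_re, Complex.conj_im]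
      ring
    have e2 : Complex.normSq (1 - (starRingEnd ℂ) b * g z)
        = 1 - 2 * s + Complex.normSq b * Complex.normSq (g z) := by
      simp only [hs, Complex.normSq_apply, Complex.sub_re, Complex.sub_im, Complex.mul_re,
        Complex.mul_im, Complex.conj_re, Complex.conj_im, Complex.one_re, Complex.one_im]
      ring
    have hna : Complex.normSq b = a ^ 2 := (Complex.sq_norm b).symm
    have hnt : Complex.normSq (g z) = t ^ 2 := (Complex.sq_norm (g z)).symm
    rw [e1, e2, hna, hnt] at hsq
    -- now a purely real computation
    have hat : a * t ≤ 1 := by nlinarith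
    have hA : (0:ℝ) ≤ (1 - r ^ 2) * (a * t - s) :=
      mul_nonneg (by nlinarith) (by linarith)
    have hB : (0:ℝ) ≤ r * (1 - a * t) := mul_nonneg hrpos.le (by linarith)
    have hQ : t ^ 2 * (1 - a ^ 2 * r ^ 2) - 2 * a * t * (1 - r ^ 2) + a ^ 2 - r ^ 2 ≤ 0 := by
      nlinarith [hsq, hA]
    by_contra hcon
    push_neg at hcon
    have hX : (0:ℝ) < t * (1 + a * r) - (a + r) := by linarith
    have hY : (0:ℝ) < (t * (1 + a * r) - (a + r)) + 2 * (r * (1 - a * t)) := by linarith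
    have hpos := mul_pos hX hY
    have hid : (t * (1 + a * r) - (a + r)) * ((t * (1 + a * r) - (a + r)) + 2 * (r * (1 - a * t)))
        = t ^ 2 * (1 - a ^ 2 * r ^ 2) - 2 * a * t * (1 - r ^ 2) + a ^ 2 - r ^ 2 := by
      ring
    rw [hid] at hpos
    linarith
  -- finish: cross-multiply
  rw [hfz, div_le_div_iff₀ hd1 hd2]
  nlinarith [mul_le_mul_of_nonneg_left key hrnn]
end

section
/- (Radial version of the boundary Schwarz Lemma) Suppose f satisfies (a), (b), (c), and for some b with |b| = 1 the radial limit c = lim_{t→1⁻} f(tb) exists with |c| = 1, and the radial derivative L = lim_{t→1⁻} (f(tb) − c)/(tb − b) exists. Then |L| ≥ 2/(1 + |f'(0)|). -/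
open Complex Filter

-- real arithmetic core of Schwarz–Pick
lemma sp_real {A W t s : ℝ} (hA0 : 0 ≤ A) (hA1 : A ≤ 1) (hW0 : 0 ≤ W) (hW1 : W ≤ 1)
    (ht0 : 0 ≤ t) (ht1 : t ≤ 1) (hs : s ≤ A * W)
    (h : A ^ 2 + W ^ 2 - 2 * s ≤ t ^ 2 * (1 + A ^ 2 * W ^ 2 - 2 * s)) :
    W * (1 + A * t) ≤ A + t := by
  have h1 : (0:ℝ) ≤ (1 - t ^ 2) * (A * W - s) :=
    mul_nonneg (by nlinarith) (by linarith)
  have key : (W - A) ^ 2 ≤ (t * (1 - A * W)) ^ 2 := by nlinarith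
  have hY : 0 ≤ t * (1 - A * W) := mul_nonneg ht0 (by nlinarith)
  nlinarith [key, hY, sq_nonneg (W - A - t * (1 - A * W))]

lemma moebius_normSq (a w : ℂ) :
    Complex.normSq (1 - (starRingEnd ℂ) a * w) - Complex.normSq (a - w)
      = (1 - Complex.normSq a) * (1 - Complex.normSq w) := by
  simp only [Complex.normSq_apply, Complex.sub_re, Complex.sub_im, Complex.mul_re, Complex.mul_im,
    Complex.one_re, Complex.one_im, Complex.conj_re, Complex.conj_im]
  ring

lemma re_mul_conj_comm (x y : ℂ) :
    (x * (starRingEnd ℂ) y).re = ((starRingEnd ℂ) x * y).re := by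
  simp only [Complex.mul_re, Complex.conj_re, Complex.conj_im]
  ring

/-- **Radial version of the boundary Schwarz Lemma.** If `f` is holomorphic on the unit
disk, maps it into itself, `f 0 = 0`, and at a boundary point `b` (with `|b| = 1`) the
radial limit `c = lim_{t→1⁻} f (t b)` exists with `|c| = 1` and the radial derivative
`L = lim_{t→1⁻} (f (t b) - c) / (t b - b)` exists, then `|L| ≥ 2 / (1 + |f'(0)|)`. -/
theorem radial_boundary_schwarz
    (f : ℂ → ℂ) (b c L : ℂ)
    (ha : DifferentiableOn ℂ f {z : ℂ | ‖z‖ < 1})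
    (hb : ∀ z : ℂ, ‖z‖ < 1 → ‖f z‖ < 1)
    (hc : f 0 = 0)
    (hbmod : ‖b‖ = 1)
    (hlim : Tendsto (fun t : ℝ => f ((t : ℂ) * b)) (nhdsWithin 1 (Set.Iio 1)) (nhds c))
    (hcmod : ‖c‖ = 1)
    (hL : Tendsto (fun t : ℝ => (f ((t : ℂ) * b) - c) / ((t : ℂ) * b - b))
      (nhdsWithin 1 (Set.Iio 1)) (nhds L)) :
    2 / (1 + ‖deriv f 0‖) ≤ ‖L‖ := by
  have hball : {z : ℂ | ‖z‖ < 1} = Metric.ball (0:ℂ) 1 := by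
    ext z; simp [Metric.mem_ball, Complex.dist_eq]
  rw [hball] at ha
  set g : ℂ → ℂ := dslope f 0 with hgdef
  have hmaps : Set.MapsTo f (Metric.ball (0:ℂ) 1) (Metric.ball (f 0) 1) := by
    intro z hz
    rw [hc]
    simpa [Metric.mem_ball, Complex.dist_eq] using
      hb z (by simpa [Metric.mem_ball, Complex.dist_eq] using hz)
  have hgd : DifferentiableOn ℂ g (Metric.ball (0:ℂ) 1) :=
    (Complex.differentiableOn_dslope (Metric.ball_mem_nhds _ one_pos)).mpr ha
  have hg1 : ∀ z ∈ Metric.ball (0:ℂ) 1, ‖g z‖ ≤ 1 := fun z hz => by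
    simpa using Complex.norm_dslope_le_div_of_mapsTo_ball ha (hmaps.mono_right Metric.ball_subset_closedBall) hz
  have hg0 : g 0 = deriv f 0 := dslope_same f 0
  have hfg : ∀ z : ℂ, z ≠ 0 → f z = z * g z := by
    intro z hz
    rw [hgdef, dslope_of_ne f hz, slope_def_field]
    field_simp [hc]
    rw [hc, sub_zero, sub_zero, mul_comm]
  set A := ‖deriv f 0‖ with hAdef
  have hA0 : 0 ≤ A := norm_nonneg _
  have hA1 : A ≤ 1 := by
    rw [hAdef, ← hg0]; exact hg1 0 (Metric.mem_ball_self one_pos)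
  have habsL : Tendsto (fun t : ℝ => ‖(f ((t:ℂ)*b) - c)/((t:ℂ)*b - b)‖)
      (nhdsWithin 1 (Set.Iio 1)) (nhds (‖L‖)) :=
    (continuous_norm.tendsto L).comp hL
  have hIoo : Set.Ioo (0:ℝ) 1 ∈ nhdsWithin (1:ℝ) (Set.Iio 1) :=
    Ioo_mem_nhdsLT_of_mem ⟨one_pos, le_rfl⟩
  by_cases hdeg : ∃ z₀ ∈ Metric.ball (0:ℂ) 1, ‖g z₀‖ = 1
  · -- degenerate case: g is a constant of modulus one
    obtain ⟨z₀, hz₀, habs1⟩ := hdeg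
    have hmax : IsMaxOn (norm ∘ g) (Metric.ball (0:ℂ) 1) z₀ := by
      intro z hz
      simp only [Function.comp_apply, Set.mem_setOf_eq, habs1]
      exact hg1 z hz
    have heq := Complex.eqOn_of_isPreconnected_of_isMaxOn_norm
      (convex_ball (0:ℂ) 1).isPreconnected Metric.isOpen_ball hgd hz₀ hmax
    have hderiv : deriv f 0 = g z₀ := by
      rw [← hg0]; exact heq (Metric.mem_ball_self one_pos)
    have hfz : ∀ t : ℝ, t ∈ Set.Ioo (0:ℝ) 1 → f ((t:ℂ)*b) = (t:ℂ)*b*(g z₀) := by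
      intro t ht
      have htb : ‖(t:ℂ)*b‖ = t := by
        rw [norm_mul, hbmod, Complex.norm_real, Real.norm_eq_abs, mul_one, abs_of_pos ht.1]
      have hne : (t:ℂ)*b ≠ 0 := by
        intro h0; rw [h0, norm_zero] at htb; exact ht.1.ne htb
      have hmem : (t:ℂ)*b ∈ Metric.ball (0:ℂ) 1 :=
        Metric.mem_ball.2 (by rw [Complex.dist_eq, sub_zero, htb]; exact ht.2)
      rw [hfg _ hne, heq hmem]
      rfl
    have hne1 : ∀ t : ℝ, t ∈ Set.Ioo (0:ℝ) 1 → (t:ℂ)*b - b ≠ 0 := by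
      intro t ht h0
      have h1 : ((t:ℂ) - 1) * b = 0 := by rw [sub_mul, one_mul]; exact h0
      rcases mul_eq_zero.mp h1 with h | h
      · have : (t:ℝ) = 1 := by exact_mod_cast sub_eq_zero.mp h
        exact ht.2.ne this
      · rw [h, norm_zero] at hbmod; norm_num at hbmod
    have hlim2 : Tendsto (fun t : ℝ => f ((t:ℂ)*b)) (nhdsWithin 1 (Set.Iio 1))
        (nhds (b * g z₀)) := by
      have hcont : Tendsto (fun t : ℝ => (t:ℂ)*b*(g z₀)) (nhdsWithin 1 (Set.Iio 1))
          (nhds (b * g z₀)) := by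
        have hC : Continuous (fun t : ℝ => (t:ℂ)*b*(g z₀)) :=
          (Complex.continuous_ofReal.mul continuous_const).mul continuous_const
        have := (hC.tendsto 1).mono_left (nhdsWithin_le_nhds (s := Set.Iio (1:ℝ)))
        simpa using this
      refine hcont.congr' ?_
      filter_upwards [hIoo] with t ht
      exact (hfz t ht).symm
    have hcbu : c = b * g z₀ := tendsto_nhds_unique hlim hlim2
    have hquot : Tendsto (fun t : ℝ => (f ((t:ℂ)*b) - c)/((t:ℂ)*b - b))
        (nhdsWithin 1 (Set.Iio 1)) (nhds (g z₀)) := by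
      refine tendsto_const_nhds.congr' ?_
      filter_upwards [hIoo] with t ht
      rw [hfz t ht, hcbu]
      rw [eq_div_iff (hne1 t ht)]
      ring
    have hLu : L = g z₀ := tendsto_nhds_unique hL hquot
    have hLabs : ‖L‖ = 1 := by rw [hLu, habs1]
    have hA1' : A = 1 := by rw [hAdef, hderiv, habs1]
    rw [hLabs, hA1']
    norm_num
  · -- main case : |g z| < 1 on the ball
    push_neg at hdeg
    have hlt : ∀ z ∈ Metric.ball (0:ℂ) 1, ‖g z‖ < 1 := fun z hz =>
      lt_of_le_of_ne (hg1 z hz) (hdeg z hz)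
    have hAlt : A < 1 := by
      rw [hAdef, ← hg0]; exact hlt 0 (Metric.mem_ball_self one_pos)
    set a : ℂ := deriv f 0 with hadef
    set h : ℂ → ℂ := fun z => (a - g z) / (1 - (starRingEnd ℂ) a * g z) with hhdef
    have hden : ∀ z ∈ Metric.ball (0:ℂ) 1, (1 - (starRingEnd ℂ) a * g z) ≠ 0 := by
      intro z hz h0
      have h1 : ‖(starRingEnd ℂ) a * g z‖ < 1 := by
        rw [norm_mul, Complex.norm_conj]
        calc ‖a‖ * ‖g z‖ ≤ 1 * ‖g z‖ :=
              mul_le_mul_of_nonneg_right hA1 (norm_nonneg _)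
          _ = ‖g z‖ := one_mul _
          _ < 1 := hlt z hz
      rw [sub_eq_zero] at h0
      rw [← h0] at h1
      simp at h1
    have hNa : Complex.normSq a < 1 := by
      have : ‖a‖ < 1 := hAlt
      rw [← Complex.sq_norm]
      nlinarith [norm_nonneg a]
    have hnormlt : ∀ z ∈ Metric.ball (0:ℂ) 1,
        Complex.normSq (a - g z) < Complex.normSq (1 - (starRingEnd ℂ) a * g z) := by
      intro z hz
      have hkey := moebius_normSq a (g z)
      have h2 : Complex.normSq (g z) < 1 := by
        have := hlt z hz
        rw [← Complex.sq_norm]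
        nlinarith [norm_nonneg (g z)]
      nlinarith
    have hmapsh : Set.MapsTo h (Metric.ball (0:ℂ) 1) (Metric.ball (0:ℂ) 1) := by
      intro z hz
      rw [Metric.mem_ball, Complex.dist_eq, sub_zero]
      have h2 : ‖a - g z‖ < ‖1 - (starRingEnd ℂ) a * g z‖ := by
        have := hnormlt z hz
        rw [← Complex.sq_norm, ← Complex.sq_norm] at this
        exact lt_of_pow_lt_pow_left₀ 2 (norm_nonneg _) this
      show ‖(a - g z) / (1 - (starRingEnd ℂ) a * g z)‖ < 1
      rw [norm_div, div_lt_one (lt_of_le_of_lt (norm_nonneg _) h2)]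
      exact h2
    have hhd : DifferentiableOn ℂ h (Metric.ball (0:ℂ) 1) := by
      refine DifferentiableOn.div ?_ ?_ hden
      · exact (differentiableOn_const a).sub hgd
      · exact (differentiableOn_const 1).sub ((differentiableOn_const _).mul hgd)
    have hh0 : h 0 = 0 := by
      show (a - g 0) / (1 - (starRingEnd ℂ) a * g 0) = 0
      rw [hg0, sub_self, zero_div]
    have hschwarz : ∀ z : ℂ, ‖z‖ < 1 → ‖h z‖ ≤ ‖z‖ :=
      fun z hz => Complex.norm_le_norm_of_mapsTo_ball hhd (hmapsh.mono_right Metric.ball_subset_closedBall) hh0 hz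
    -- Schwarz–Pick bound on g
    have hsp : ∀ z ∈ Metric.ball (0:ℂ) 1,
        ‖g z‖ * (1 + A * ‖z‖) ≤ A + ‖z‖ := by
      intro z hz
      have hzlt : ‖z‖ < 1 := by simpa [Metric.mem_ball, Complex.dist_eq] using hz
      have h1 : ‖a - g z‖ ≤
          ‖z‖ * ‖1 - (starRingEnd ℂ) a * g z‖ := by
        have hsz := hschwarz z hzlt
        have hsz' : ‖(a - g z) / (1 - (starRingEnd ℂ) a * g z)‖ ≤ ‖z‖ := hsz
        rw [norm_div] at hsz'
        have hdpos : 0 < ‖1 - (starRingEnd ℂ) a * g z‖ :=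
          norm_pos_iff.mpr (hden z hz)
        calc ‖a - g z‖
            = ‖a - g z‖ / ‖1 - (starRingEnd ℂ) a * g z‖
              * ‖1 - (starRingEnd ℂ) a * g z‖ := (div_mul_cancel₀ _ hdpos.ne').symm
          _ ≤ ‖z‖ * ‖1 - (starRingEnd ℂ) a * g z‖ :=
              mul_le_mul_of_nonneg_right hsz' hdpos.le
      have h2 : Complex.normSq (a - g z) ≤
          ‖z‖ ^ 2 * Complex.normSq (1 - (starRingEnd ℂ) a * g z) := by
        rw [← Complex.sq_norm, ← Complex.sq_norm]
        calc ‖a - g z‖ ^ 2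
            ≤ (‖z‖ * ‖1 - (starRingEnd ℂ) a * g z‖) ^ 2 :=
              pow_le_pow_left₀ (norm_nonneg _) h1 2
          _ = ‖z‖ ^ 2 * ‖1 - (starRingEnd ℂ) a * g z‖ ^ 2 := by ring
      set s : ℝ := ((starRingEnd ℂ) a * g z).re with hsdef
      have e1 : Complex.normSq (a - g z)
          = ‖a‖ ^ 2 + ‖g z‖ ^ 2 - 2 * s := by
        rw [Complex.sq_norm, Complex.sq_norm, hsdef]
        simp only [Complex.normSq_apply, Complex.sub_re, Complex.sub_im, Complex.mul_re,
          Complex.mul_im, Complex.conj_re, Complex.conj_im]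
        ring
      have e2 : Complex.normSq (1 - (starRingEnd ℂ) a * g z)
          = 1 + ‖a‖ ^ 2 * ‖g z‖ ^ 2 - 2 * s := by
        rw [Complex.sq_norm, Complex.sq_norm, hsdef]
        simp only [Complex.normSq_apply, Complex.sub_re, Complex.sub_im, Complex.mul_re,
          Complex.mul_im, Complex.conj_re, Complex.conj_im, Complex.one_re, Complex.one_im]
        ring
      have hs : s ≤ ‖a‖ * ‖g z‖ := by
        rw [hsdef]
        calc ((starRingEnd ℂ) a * g z).re ≤ ‖(starRingEnd ℂ) a * g z‖ :=
            Complex.re_le_norm _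
          _ = ‖a‖ * ‖g z‖ := by rw [norm_mul, Complex.norm_conj]
      have hAa : A = ‖a‖ := hAdef
      rw [hAa]
      refine sp_real (norm_nonneg _) (hAa ▸ hA1) (norm_nonneg _) (hg1 z hz)
        (norm_nonneg _) hzlt.le hs ?_
      rw [e1, e2] at h2
      linarith
    -- pointwise lower bound on the quotient
    have hev : ∀ᶠ t : ℝ in nhdsWithin 1 (Set.Iio 1),
        (1 + t) / (1 + A * t) ≤ ‖(f ((t:ℂ)*b) - c)/((t:ℂ)*b - b)‖ := by
      filter_upwards [hIoo] with t ht
      obtain ⟨ht0, ht1⟩ := ht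
      have htb : ‖(t:ℂ)*b‖ = t := by
        rw [norm_mul, hbmod, Complex.norm_real, Real.norm_eq_abs, mul_one, abs_of_pos ht0]
      have hzball : (t:ℂ)*b ∈ Metric.ball (0:ℂ) 1 :=
        Metric.mem_ball.2 (by rw [Complex.dist_eq, sub_zero, htb]; exact ht1)
      have hne : (t:ℂ)*b ≠ 0 := by
        intro h0; rw [h0, norm_zero] at htb; exact ht0.ne htb
      have hFle : ‖f ((t:ℂ)*b)‖ * (1 + A * t) ≤ t * (A + t) := by
        rw [hfg _ hne, norm_mul, htb, mul_assoc]
        have hh := hsp _ hzball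
        rw [htb] at hh
        exact mul_le_mul_of_nonneg_left hh ht0.le
      have hdb : ‖(t:ℂ)*b - b‖ = 1 - t := by
        have he : (t:ℂ)*b - b = ((t:ℂ) - 1) * b := by ring
        rw [he, norm_mul, hbmod, mul_one,
          show ((t:ℂ) - 1) = ((t - 1 : ℝ) : ℂ) by push_cast; ring,
          Complex.norm_real, Real.norm_eq_abs, abs_of_neg (by linarith)]
        ring
      have hnum : 1 - ‖f ((t:ℂ)*b)‖ ≤ ‖f ((t:ℂ)*b) - c‖ := by
        have h1 : ‖c‖ - ‖f ((t:ℂ)*b)‖ ≤ ‖c - f ((t:ℂ)*b)‖ := by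
          simpa using norm_sub_norm_le c (f ((t:ℂ)*b))
        rw [hcmod, norm_sub_rev c (f ((t:ℂ)*b))] at h1
        exact h1
      rw [norm_div, hdb]
      have h1At : (0:ℝ) < 1 + A * t := by nlinarith
      have h1t : (0:ℝ) < 1 - t := by linarith
      rw [div_le_div_iff₀ h1At h1t]
      calc (1 + t) * (1 - t)
          ≤ (1 - ‖f ((t:ℂ)*b)‖) * (1 + A * t) := by nlinarith
        _ ≤ ‖f ((t:ℂ)*b) - c‖ * (1 + A * t) :=
            mul_le_mul_of_nonneg_right hnum h1At.le
    -- take limits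
    have hlim2 : Tendsto (fun t : ℝ => (1 + t) / (1 + A * t))
        (nhdsWithin 1 (Set.Iio 1)) (nhds (2 / (1 + A))) := by
      have hc1 : ContinuousAt (fun t : ℝ => (1 + t) / (1 + A * t)) 1 := by
        apply ContinuousAt.div
        · exact (continuous_const.add continuous_id).continuousAt
        · exact (continuous_const.add (continuous_const.mul continuous_id)).continuousAt
        · simp only [mul_one]; nlinarith
      have h2 := hc1.tendsto.mono_left (nhdsWithin_le_nhds (s := Set.Iio (1:ℝ)))
      have he : ((1:ℝ) + 1)/(1 + A*1) = 2/(1 + A) := by norm_num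
      rwa [he] at h2
    exact le_of_tendsto_of_tendsto hlim2 habsL hev
end

section
/- Suppose f satisfies (a), (b), (d) (the condition f(0) = 0 is not assumed), and let F(z) = (f(z) − f(0))/(1 − conj(f(0)) · f(z)). Then F satisfies hypotheses (a), (b), (c), (d) at the same boundary point b, and its derivative at b satisfies |F'(b)| = |f'(b)| · (1 − |f(0)|²)/|1 − conj(f(0)) f(b)|² ≤ |f'(b)| · (1 + |f(0)|)/(1 − |f(0)|). -/
open Complex Filter

/-- If `f` satisfies (a), (b), (d) (not assuming `f 0 = 0`) and
`F z = (f z - f 0) / (1 - conj (f 0) · f z)`, then `F` satisfies (a), (b), (c), (d) at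
the same boundary point `b`, and its derivative `F'(b)` satisfies
`|F'(b)| = |f'(b)| (1 - |f 0|²) / |1 - conj (f 0) f b|² ≤ |f'(b)| (1 + |f 0|)/(1 - |f 0|)`. -/
theorem mobius_transfer_boundary
    (f F : ℂ → ℂ) (b fb' : ℂ)
    (ha : DifferentiableOn ℂ f {z : ℂ | ‖z‖ < 1})
    (hb : ∀ z : ℂ, ‖z‖ < 1 → ‖f z‖ < 1)
    (hbmod : ‖b‖ = 1)
    (hcont : ContinuousWithinAt f ({z : ℂ | ‖z‖ < 1} ∪ {b}) b)
    (hfb : ‖f b‖ = 1)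
    (hderiv : Tendsto (fun z => (f z - f b) / (z - b))
      (nhdsWithin b {z : ℂ | ‖z‖ < 1}) (nhds fb'))
    (hF : F = fun z => (f z - f 0) / (1 - (starRingEnd ℂ) (f 0) * f z)) :
    DifferentiableOn ℂ F {z : ℂ | ‖z‖ < 1} ∧
    (∀ z : ℂ, ‖z‖ < 1 → ‖F z‖ < 1) ∧
    F 0 = 0 ∧
    ContinuousWithinAt F ({z : ℂ | ‖z‖ < 1} ∪ {b}) b ∧
    ‖F b‖ = 1 ∧
    ∃ Fb' : ℂ,
      Tendsto (fun z => (F z - F b) / (z - b))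
        (nhdsWithin b {z : ℂ | ‖z‖ < 1}) (nhds Fb') ∧
      ‖Fb'‖ = ‖fb'‖ * (1 - ‖f 0‖ ^ 2) /
        ‖1 - (starRingEnd ℂ) (f 0) * f b‖ ^ 2 ∧
      ‖Fb'‖ ≤
        ‖fb'‖ * ((1 + ‖f 0‖) / (1 - ‖f 0‖)) := by
  have h0 : ‖f 0‖ < 1 := hb 0 (by simp)
  set a : ℂ := f 0 with ha0
  -- nonvanishing of the denominator
  have hne : ∀ w : ℂ, ‖w‖ ≤ 1 → (1 - (starRingEnd ℂ) a * w) ≠ 0 := by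
    intro w hw h
    have h1 : (starRingEnd ℂ) a * w = 1 := by
      have := sub_eq_zero.mp h; exact this.symm
    have : ‖(starRingEnd ℂ) a * w‖ = 1 := by rw [h1]; simp
    rw [norm_mul, Complex.norm_conj] at this
    nlinarith [norm_nonneg w, norm_nonneg a]
  -- key algebraic identity
  have key : ∀ w : ℂ, Complex.normSq (1 - (starRingEnd ℂ) a * w) - Complex.normSq (w - a)
      = (1 - Complex.normSq a) * (1 - Complex.normSq w) := by
    intro w
    have : ((Complex.normSq (1 - (starRingEnd ℂ) a * w) : ℂ)) - Complex.normSq (w - a)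
        = ((1 - Complex.normSq a : ℝ) * (1 - Complex.normSq w) : ℝ) := by
      push_cast
      rw [← Complex.mul_conj, ← Complex.mul_conj, ← Complex.mul_conj, ← Complex.mul_conj]
      simp only [map_sub, map_mul, map_one, Complex.conj_conj]
      ring
    exact_mod_cast congrArg Complex.re this
  have hdb : (1 - (starRingEnd ℂ) a * f b) ≠ 0 := hne _ (le_of_eq hfb)
  -- (b) for F
  have hFb : ∀ z : ℂ, ‖z‖ < 1 → ‖F z‖ < 1 := by
    intro z hz
    have hfz := hb z hz
    have hd := hne (f z) hfz.le
    have hlt : Complex.normSq (f z - a) < Complex.normSq (1 - (starRingEnd ℂ) a * f z) := by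
      have := key (f z)
      have h1 : 0 < 1 - Complex.normSq a := by
        rw [← Complex.sq_norm]; nlinarith [norm_nonneg a]
      have h2 : 0 < 1 - Complex.normSq (f z) := by
        rw [← Complex.sq_norm]; nlinarith [norm_nonneg (f z)]
      nlinarith
    rw [hF]
    simp only [norm_div]
    rw [div_lt_one (norm_pos_iff.mpr hd)]
    have := Complex.sq_norm (f z - a)
    have := Complex.sq_norm (1 - (starRingEnd ℂ) a * f z)
    nlinarith [norm_nonneg (f z - a), norm_nonneg (1 - (starRingEnd ℂ) a * f z)]
  have habs : ‖F b‖ = 1 := by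
    have heq : Complex.normSq (f b - a) = Complex.normSq (1 - (starRingEnd ℂ) a * f b) := by
      have := key (f b)
      have h2 : Complex.normSq (f b) = 1 := by
        rw [← Complex.sq_norm, hfb]; norm_num
      rw [h2] at this; nlinarith
    have : ‖f b - a‖ = ‖1 - (starRingEnd ℂ) a * f b‖ := by
      rw [Complex.norm_def, Complex.norm_def, heq]
    rw [hF]
    simp only [norm_div, this]
    exact div_self (norm_ne_zero_iff.mpr hdb)
  refine ⟨?_, hFb, ?_, ?_, habs, ?_⟩
  · -- differentiability
    rw [hF]
    apply DifferentiableOn.div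
    · exact ha.sub (differentiableOn_const _)
    · exact (differentiableOn_const _).sub ((differentiableOn_const _).mul ha)
    · intro z hz; exact hne (f z) (hb z hz).le
  · rw [hF]; simp [ha0]
  · -- continuity within at b
    rw [hF]
    apply ContinuousWithinAt.div
    · exact hcont.sub continuousWithinAt_const
    · exact continuousWithinAt_const.sub (continuousWithinAt_const.mul hcont)
    · exact hdb
  · -- derivative
    refine ⟨fb' * ((1 - (Complex.normSq a : ℂ)) / (1 - (starRingEnd ℂ) a * f b) ^ 2), ?_, ?_, ?_⟩
    · have hft : Tendsto f (nhdsWithin b {z : ℂ | ‖z‖ < 1}) (nhds (f b)) :=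
        hcont.mono_left (nhdsWithin_mono _ Set.subset_union_left)
      have h2 : Tendsto (fun z => (1 - (Complex.normSq a : ℂ)) /
            ((1 - (starRingEnd ℂ) a * f z) * (1 - (starRingEnd ℂ) a * f b)))
          (nhdsWithin b {z : ℂ | ‖z‖ < 1})
          (nhds ((1 - (Complex.normSq a : ℂ)) /
            ((1 - (starRingEnd ℂ) a * f b) * (1 - (starRingEnd ℂ) a * f b)))) := by
        exact Tendsto.div tendsto_const_nhds
          (((tendsto_const_nhds.sub (tendsto_const_nhds.mul hft))).mul tendsto_const_nhds)
          (mul_ne_zero hdb hdb)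
      have := hderiv.mul h2
      have heq : ∀ᶠ z in nhdsWithin b {z : ℂ | ‖z‖ < 1},
          (fun z => (f z - f b) / (z - b) * ((1 - (Complex.normSq a : ℂ)) /
            ((1 - (starRingEnd ℂ) a * f z) * (1 - (starRingEnd ℂ) a * f b)))) z
          = (F z - F b) / (z - b) := by
        filter_upwards [self_mem_nhdsWithin] with z hz
        have hz' : ‖z‖ < 1 := hz
        have hzb : z - b ≠ 0 := by
          intro h; rw [sub_eq_zero] at h; rw [h, hbmod] at hz'; linarith
        have hdz : (1 - (starRingEnd ℂ) a * f z) ≠ 0 := hne (f z) (hb z hz').le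
        rw [hF]
        simp only [← Complex.mul_conj]
        have hdz' : 1 - f z * (starRingEnd ℂ) a ≠ 0 := by rwa [mul_comm]
        have hdb' : 1 - f b * (starRingEnd ℂ) a ≠ 0 := by rwa [mul_comm]
        field_simp
        ring
      rw [show ((1 - (starRingEnd ℂ) a * f b) ^ 2 : ℂ)
          = (1 - (starRingEnd ℂ) a * f b) * (1 - (starRingEnd ℂ) a * f b) from sq _]
      exact Tendsto.congr' heq this
    · have h1 : ‖1 - (Complex.normSq a : ℂ)‖ = 1 - ‖a‖ ^ 2 := by
        rw [show (1 - (Complex.normSq a : ℂ)) = ((1 - Complex.normSq a : ℝ) : ℂ) by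
          push_cast; ring, Complex.norm_real, Real.norm_eq_abs, ← Complex.sq_norm a]
        exact abs_of_nonneg (by nlinarith [norm_nonneg a])
      rw [norm_mul, norm_div, norm_pow, h1, mul_div_assoc]
    · rw [norm_mul, norm_div, norm_pow]
      have h1 : ‖1 - (Complex.normSq a : ℂ)‖ = 1 - ‖a‖ ^ 2 := by
        rw [show (1 - (Complex.normSq a : ℂ)) = ((1 - Complex.normSq a : ℝ) : ℂ) by
          push_cast; ring, Complex.norm_real, Real.norm_eq_abs, ← Complex.sq_norm a]
        exact abs_of_nonneg (by nlinarith [norm_nonneg a])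
      rw [h1]
      set t := ‖a‖ with ht
      set D := ‖1 - (starRingEnd ℂ) a * f b‖ with hD0
      have hD : 1 - t ≤ D := by
        have h2 : ‖(starRingEnd ℂ) a * f b‖ = t := by
          rw [norm_mul, Complex.norm_conj, hfb, mul_one]
        calc 1 - t = ‖1‖ - ‖(starRingEnd ℂ) a * f b‖ := by
              rw [h2, norm_one]
          _ ≤ D := norm_sub_norm_le _ _
      have h1t : 0 < 1 - t := by linarith
      have htn : 0 ≤ t := norm_nonneg a
      have hcn : 0 ≤ ‖fb'‖ := norm_nonneg fb'
      have hD2 : (1 - t) ^ 2 ≤ D ^ 2 := by nlinarith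
      calc ‖fb'‖ * ((1 - t ^ 2) / D ^ 2)
          ≤ ‖fb'‖ * ((1 - t ^ 2) / (1 - t) ^ 2) := by
            gcongr
            nlinarith
        _ = ‖fb'‖ * ((1 + t) / (1 - t)) := by
            rw [show (1 - t ^ 2) = (1 + t) * (1 - t) by ring, sq]
            rw [mul_div_mul_right _ _ (by linarith : (1 - t) ≠ 0)]
end

section
/- Suppose f satisfies (a)–(d) and in addition f'(0) = 0. Then |f'(b)| ≥ 2, and |f'(b)| > 2 unless f(z) = e^{iα} z² on D for some real α. -/
open Complex Filter Metric

lemma aux_dslope_bound (u : ℂ → ℂ) (hu : DifferentiableOn ℂ u (ball 0 1))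
    (hble : ∀ z ∈ ball (0:ℂ) 1, ‖u z‖ ≤ 1) (h0 : u 0 = 0) :
    ∀ z ∈ ball (0:ℂ) 1, ‖dslope u 0 z‖ ≤ 1 := by
  intro z hz
  have hz1 : ‖z‖ < 1 := by simpa using hz
  refine le_of_forall_pos_le_add ?_
  intro ε hε
  set r : ℝ := max ((1 + ε/2)/(1 + ε)) ((‖z‖ + 1)/2) with hr
  have hεp : (0:ℝ) < 1 + ε := by linarith
  have hr1 : r < 1 := by
    apply max_lt
    · rw [div_lt_one hεp]; linarith
    · linarith
  have hrz : ‖z‖ < r := lt_of_lt_of_le (by linarith) (le_max_right _ _)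
  have hrpos : 0 < r := lt_of_le_of_lt (norm_nonneg z) hrz
  have key := norm_dslope_le_div_of_mapsTo_ball (f := u) (c := 0) (R₁ := r) (R₂ := 1 + ε/2)
    (hu.mono (ball_subset_ball hr1.le))
    (fun w hw => by
      simp only [mem_ball, mem_closedBall, h0, dist_zero_right] at *
      exact le_trans (hble w (lt_trans hw hr1)) (by linarith : (1:ℝ) ≤ 1 + ε/2))
    (by simpa [mem_ball, dist_zero_right] using hrz)
  have h2 : (1 + ε/2)/r ≤ 1 + ε := by
    rw [div_le_iff₀ hrpos]
    have : (1 + ε/2)/(1 + ε) ≤ r := le_max_left _ _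
    calc 1 + ε/2 = ((1 + ε/2)/(1+ε)) * (1+ε) := by field_simp
    _ ≤ r * (1+ε) := mul_le_mul_of_nonneg_right this hεp.le
    _ = (1+ε) * r := mul_comm _ _
  linarith [key]

lemma aux_schwarz_pt (u : ℂ → ℂ) (hu : DifferentiableOn ℂ u (ball 0 1))
    (hble : ∀ z ∈ ball (0:ℂ) 1, ‖u z‖ ≤ 1) (h0 : u 0 = 0) :
    ∀ z ∈ ball (0:ℂ) 1, ‖u z‖ ≤ ‖z‖ := by
  intro z hz
  rcases eq_or_ne z 0 with rfl | hne
  · simp [h0]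
  · have := aux_dslope_bound u hu hble h0 z hz
    rw [dslope_of_ne _ hne, slope_def_field] at this
    have : ‖(u z - u 0) / (z - 0)‖ ≤ 1 := this
    rw [h0, sub_zero, sub_zero, norm_div] at this
    have hzpos : 0 < ‖z‖ := norm_pos_iff.mpr hne
    exact (div_le_one hzpos).mp this

lemma aux_normSq_identity (c w : ℂ) :
    ‖(1:ℂ) - (starRingEnd ℂ) c * w‖^2 - ‖w - c‖^2 = (1 - ‖c‖^2) * (1 - ‖w‖^2) := by
  simp only [Complex.sq_norm, Complex.normSq_apply, Complex.sub_re,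
    Complex.sub_im, Complex.mul_re, Complex.mul_im, Complex.one_re, Complex.one_im,
    Complex.conj_re, Complex.conj_im]
  ring

lemma aux_normSq_sub (c w : ℂ) :
    ‖w - c‖^2 = ‖w‖^2 + ‖c‖^2 - 2*(w * (starRingEnd ℂ) c).re := by
  simp only [Complex.sq_norm, Complex.normSq_apply, Complex.sub_re,
    Complex.sub_im, Complex.mul_re, Complex.mul_im, Complex.conj_re, Complex.conj_im]
  ring

lemma aux_normSq_one_sub (c w : ℂ) :
    ‖(1:ℂ) - (starRingEnd ℂ) c * w‖^2 = 1 + ‖c‖^2*‖w‖^2 - 2*(w * (starRingEnd ℂ) c).re := by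
  simp only [Complex.sq_norm, Complex.normSq_apply, Complex.sub_re,
    Complex.sub_im, Complex.mul_re, Complex.mul_im, Complex.one_re, Complex.one_im,
    Complex.conj_re, Complex.conj_im]
  ring

lemma aux_sp (a s m t : ℝ) (ha0 : 0 ≤ a) (ha1 : a < 1) (hs0 : 0 ≤ s) (hs1 : s ≤ 1)
    (hm0 : 0 ≤ m) (hm1 : m ≤ 1) (ht : t ≤ a*m)
    (hkey : m^2 + a^2 - 2*t ≤ s^2*(1 + a^2*m^2 - 2*t)) : m*(1+a*s) ≤ a + s := by
  have h1s : (0:ℝ) ≤ 1 - s^2 := by nlinarith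
  have h4 : (m - a)^2 ≤ (s*(1 - a*m))^2 := by
    nlinarith [mul_nonneg (sub_nonneg.2 ht) h1s]
  have hB : 0 ≤ s*(1-a*m) := mul_nonneg hs0 (by nlinarith)
  nlinarith [h4, hB]

/-- If `f` satisfies (a)–(d) and moreover `f'(0) = 0`, then `|f'(b)| ≥ 2`, and
`|f'(b)| > 2` unless `f z = e^{iα} z²` on the disk for some real `α`. -/
theorem boundary_schwarz_second_order
    (f : ℂ → ℂ) (b fb' : ℂ)
    (ha : DifferentiableOn ℂ f {z : ℂ | ‖z‖ < 1})
    (hb : ∀ z : ℂ, ‖z‖ < 1 → ‖f z‖ < 1)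
    (hc : f 0 = 0)
    (hbmod : ‖b‖ = 1)
    (hcont : ContinuousWithinAt f ({z : ℂ | ‖z‖ < 1} ∪ {b}) b)
    (hfb : ‖f b‖ = 1)
    (hderiv : Tendsto (fun z => (f z - f b) / (z - b))
      (nhdsWithin b {z : ℂ | ‖z‖ < 1}) (nhds fb'))
    (hd0 : deriv f 0 = 0) :
    2 ≤ ‖fb'‖ ∧
      ((¬ ∃ α : ℝ, ∀ z : ℂ, ‖z‖ < 1 →
          f z = Complex.exp (α * Complex.I) * z ^ 2) →
        2 < ‖fb'‖) := by
  have hDball : {z : ℂ | ‖z‖ < 1} = Metric.ball (0:ℂ) 1 := by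
    ext z; simp [Metric.mem_ball, Complex.dist_eq]
  rw [hDball] at ha hcont hderiv
  have hb' : ∀ z ∈ Metric.ball (0:ℂ) 1, ‖f z‖ ≤ 1 := by
    intro z hz
    have hz' : ‖z‖ < 1 := by simpa [Metric.mem_ball, Complex.dist_eq] using hz
    exact le_of_lt (by simpa using hb z hz')
  have hbn : ‖b‖ = 1 := by exact hbmod
  have hfbn : ‖f b‖ = 1 := by exact hfb
  have h0mem : (0:ℂ) ∈ Metric.ball (0:ℂ) 1 := by simp
  set h : ℂ → ℂ := dslope f 0 with hh
  have hhdiff : DifferentiableOn ℂ h (Metric.ball 0 1) :=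
    (differentiableOn_dslope (isOpen_ball.mem_nhds h0mem)).mpr ha
  have hh0 : h 0 = 0 := by rw [hh, dslope_same, hd0]
  have hhle : ∀ z ∈ Metric.ball (0:ℂ) 1, ‖h z‖ ≤ 1 := aux_dslope_bound f ha hb' hc
  set g : ℂ → ℂ := dslope h 0 with hg
  have hgdiff : DifferentiableOn ℂ g (Metric.ball 0 1) :=
    (differentiableOn_dslope (isOpen_ball.mem_nhds h0mem)).mpr hhdiff
  have hgle : ∀ z ∈ Metric.ball (0:ℂ) 1, ‖g z‖ ≤ 1 := aux_dslope_bound h hhdiff hhle hh0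
  have hfactor : ∀ z ∈ Metric.ball (0:ℂ) 1, f z = z^2 * g z := by
    intro z hz
    rcases eq_or_ne z 0 with rfl | hne
    · simp [hc]
    · have h1 : h z = f z / z := by
        rw [hh, dslope_of_ne _ hne, slope_def_field, hc, sub_zero, sub_zero]
      have h2 : g z = h z / z := by
        rw [hg, dslope_of_ne _ hne, slope_def_field, hh0, sub_zero, sub_zero]
      rw [h2, h1]; field_simp
  haveI hbne : (nhdsWithin b (Metric.ball (0:ℂ) 1)).NeBot := by
    rw [← mem_closure_iff_nhdsWithin_neBot, closure_ball (0:ℂ) one_ne_zero,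
      mem_closedBall, Complex.dist_eq, sub_zero, hbmod]
  have hradial : Tendsto (fun r : ℝ => (r:ℂ)*b) (nhdsWithin 1 (Set.Ioo (0:ℝ) 1))
      (nhdsWithin b (Metric.ball (0:ℂ) 1)) := by
    rw [tendsto_nhdsWithin_iff]
    constructor
    · have h1 : Tendsto (fun r : ℝ => (r:ℂ)*b) (nhds 1) (nhds (((1:ℝ):ℂ)*b)) :=
        (Complex.continuous_ofReal.mul continuous_const).tendsto 1
      simpa using h1.mono_left nhdsWithin_le_nhds
    · filter_upwards [self_mem_nhdsWithin] with r hr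
      rw [Metric.mem_ball, Complex.dist_eq, sub_zero, norm_mul, Complex.norm_real, Real.norm_eq_abs, hbmod,
        mul_one, abs_of_pos hr.1]
      exact hr.2
  have hqt : Tendsto (fun r : ℝ => ‖(f ((r:ℂ)*b) - f b)/((r:ℂ)*b - b)‖)
      (nhdsWithin 1 (Set.Ioo (0:ℝ) 1)) (nhds ‖fb'‖) := (hderiv.comp hradial).norm
  haveI hIoo : (nhdsWithin (1:ℝ) (Set.Ioo (0:ℝ) 1)).NeBot := by
    rw [← mem_closure_iff_nhdsWithin_neBot, closure_Ioo (by norm_num : (0:ℝ) ≠ 1)]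
    exact Set.right_mem_Icc.2 (by norm_num)
  by_cases hcase : ∃ z₀ ∈ Metric.ball (0:ℂ) 1, ‖g z₀‖ = 1
  · obtain ⟨z₀, hz₀, hgz₀⟩ := hcase
    have heq : Set.EqOn g (Function.const ℂ (g z₀)) (Metric.ball 0 1) :=
      Complex.eqOn_of_isPreconnected_of_isMaxOn_norm (convex_ball _ _).isPreconnected
        isOpen_ball hgdiff hz₀
        (isMaxOn_iff.mpr fun w hw => by
          simp only [Function.comp_apply]; rw [hgz₀]; exact hgle w hw)
    set C := g z₀ with hC
    have hfCeq : ∀ z ∈ Metric.ball (0:ℂ) 1, f z = C * z^2 := by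
      intro z hz; rw [hfactor z hz, heq hz, Function.const_apply]; ring
    have h1 : Tendsto f (nhdsWithin b (Metric.ball 0 1)) (nhds (f b)) :=
      hcont.mono_left (nhdsWithin_mono b Set.subset_union_left)
    have h2 : Tendsto f (nhdsWithin b (Metric.ball 0 1)) (nhds (C * b^2)) := by
      apply Tendsto.congr' _
        (((continuous_const.mul (continuous_pow 2)).tendsto b).mono_left nhdsWithin_le_nhds)
      filter_upwards [self_mem_nhdsWithin] with z hz
      exact (hfCeq z hz).symm
    have hfb_eq : f b = C * b^2 := tendsto_nhds_unique h1 h2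
    have hCabs : ‖C‖ = 1 := by
      have h3 := hfbn
      rw [hfb_eq, norm_mul, norm_pow, hbn] at h3
      simpa using h3
    have h3 : Tendsto (fun z : ℂ => C*(z + b)) (nhdsWithin b (Metric.ball 0 1))
        (nhds (C*(b+b))) :=
      ((continuous_const.mul (continuous_id.add continuous_const)).tendsto b).mono_left
        nhdsWithin_le_nhds
    have h4 : Tendsto (fun z => (f z - f b)/(z - b)) (nhdsWithin b (Metric.ball 0 1))
        (nhds (C*(b+b))) := by
      apply Tendsto.congr' _ h3
      filter_upwards [self_mem_nhdsWithin] with z hz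
      have hzb : z ≠ b := by
        intro hzb; rw [hzb, Metric.mem_ball, Complex.dist_eq, sub_zero, hbmod] at hz
        exact lt_irrefl _ hz
      rw [hfCeq z hz, hfb_eq]
      field_simp [sub_ne_zero.mpr hzb]
      ring
    have hfb'eq : fb' = C*(b+b) := tendsto_nhds_unique hderiv h4
    have habs : ‖fb'‖ = 2 := by
      have : b + b = (2:ℂ)*b := by ring
      rw [hfb'eq, this, norm_mul, norm_mul, hCabs, hbn]
      norm_num
    constructor
    · rw [habs]
    · intro hne; exfalso; apply hne
      obtain ⟨θ, hθ⟩ := (Complex.norm_eq_one_iff C).mp hCabs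
      exact ⟨θ, fun z hz => by
        rw [hfCeq z (by simpa [Metric.mem_ball, Complex.dist_eq] using hz), hθ]⟩
  · push_neg at hcase
    have hglt : ∀ z ∈ Metric.ball (0:ℂ) 1, ‖g z‖ < 1 := fun z hz =>
      lt_of_le_of_ne (hgle z hz) (hcase z hz)
    set c := g 0 with hc0
    set a := ‖g 0‖ with hadef
    have ha0 : 0 ≤ a := norm_nonneg _
    have ha1 : a < 1 := hglt 0 h0mem
    set ψ : ℂ → ℂ := fun z => (g z - c) / (1 - (starRingEnd ℂ) c * g z) with hψ
    have hden : ∀ z ∈ Metric.ball (0:ℂ) 1, (1:ℂ) - (starRingEnd ℂ) c * g z ≠ 0 := by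
      intro z hz hcontra
      have hlt : ‖(starRingEnd ℂ) c * g z‖ < 1 := by
        rw [norm_mul, RCLike.norm_conj]
        have := hgle z hz
        nlinarith [norm_nonneg (g z)]
      rw [sub_eq_zero] at hcontra
      rw [← hcontra] at hlt
      simp at hlt
    have hψdiff : DifferentiableOn ℂ ψ (Metric.ball 0 1) :=
      (hgdiff.sub (differentiableOn_const c)).div
        ((differentiableOn_const _).sub ((differentiableOn_const _).mul hgdiff)) hden
    have hψlt : ∀ z ∈ Metric.ball (0:ℂ) 1, ‖ψ z‖ < 1 := by
      intro z hz
      have hdpos : 0 < ‖(1:ℂ) - (starRingEnd ℂ) c * g z‖ := norm_pos_iff.mpr (hden z hz)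
      rw [hψ]
      simp only
      rw [norm_div, div_lt_one hdpos]
      have hid := aux_normSq_identity c (g z)
      have h1 : 0 < (1 - ‖c‖^2) * (1 - ‖g z‖^2) := by
        have := hglt z hz
        apply mul_pos <;> nlinarith [norm_nonneg (g z), norm_nonneg c]
      have h2 : ‖g z - c‖^2 < ‖(1:ℂ) - (starRingEnd ℂ) c * g z‖^2 := by linarith
      exact lt_of_pow_lt_pow_left₀ 2 (norm_nonneg _) h2
    have hψ0 : ψ 0 = 0 := by rw [hψ]; simp [hc0]
    have hψle := aux_schwarz_pt ψ hψdiff (fun z hz => (hψlt z hz).le) hψ0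
    have hSP : ∀ z ∈ Metric.ball (0:ℂ) 1, ‖g z‖*(1 + a*‖z‖) ≤ a + ‖z‖ := by
      intro z hz
      have hdpos : 0 < ‖(1:ℂ) - (starRingEnd ℂ) c * g z‖ := norm_pos_iff.mpr (hden z hz)
      have hkey : ‖g z - c‖ ≤ ‖z‖ * ‖(1:ℂ) - (starRingEnd ℂ) c * g z‖ := by
        have h5 := hψle z hz
        rw [hψ] at h5
        simp only at h5
        rw [norm_div, div_le_iff₀ hdpos] at h5
        exact h5
      have hsq : ‖g z - c‖^2 ≤ ‖z‖^2 * ‖(1:ℂ) - (starRingEnd ℂ) c * g z‖^2 := by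
        nlinarith [norm_nonneg (g z - c), norm_nonneg z, hdpos.le, hkey]
      rw [aux_normSq_sub, aux_normSq_one_sub] at hsq
      have hz1 : ‖z‖ ≤ 1 := le_of_lt (by simpa using hz)
      have ht : (g z * (starRingEnd ℂ) c).re ≤ a * ‖g z‖ := by
        calc (g z * (starRingEnd ℂ) c).re ≤ ‖g z * (starRingEnd ℂ) c‖ := by
              exact Complex.re_le_norm _
        _ = ‖g z‖ * a := by rw [norm_mul, RCLike.norm_conj]
        _ = a * ‖g z‖ := mul_comm _ _
      refine aux_sp a ‖z‖ ‖g z‖ ((g z * (starRingEnd ℂ) c).re) ha0 ha1 (norm_nonneg z) hz1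
        (norm_nonneg _) (hgle z hz) ht ?_
      nlinarith [hsq]
    have hlow : ∀ r ∈ Set.Ioo (0:ℝ) 1,
        (1+r+r^2+a*r)/(1+a*r) ≤ ‖(f ((r:ℂ)*b) - f b)/((r:ℂ)*b - b)‖ := by
      intro r hr
      obtain ⟨hr0, hr1⟩ := hr
      have hzb : ‖(r:ℂ)*b‖ = r := by
        rw [norm_mul, hbn, mul_one, Complex.norm_real, Real.norm_eq_abs, abs_of_pos hr0]
      have hzmem : (r:ℂ)*b ∈ Metric.ball (0:ℂ) 1 := by
        rw [Metric.mem_ball, dist_zero_right, hzb]; exact hr1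
      have hm := hSP _ hzmem
      rw [hzb] at hm
      set m := ‖g ((r:ℂ)*b)‖ with hmdef
      have hm0 : 0 ≤ m := norm_nonneg _
      have hden1 : (0:ℝ) < 1 + a*r := by nlinarith
      have hfz : ‖f ((r:ℂ)*b)‖ = r^2 * m := by
        rw [hfactor _ hzmem, norm_mul, norm_pow, hzb]
      have hdenom : ‖(r:ℂ)*b - b‖ = 1 - r := by
        have heq2 : (r:ℂ)*b - b = ((r:ℂ) - 1)*b := by ring
        have heq3 : (r:ℂ) - 1 = ((r - 1 : ℝ) : ℂ) := by push_cast; ring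
        rw [heq2, norm_mul, hbn, mul_one, heq3, Complex.norm_real, Real.norm_eq_abs]
        rw [abs_of_nonpos (by linarith)]
        ring
      rw [norm_div, hdenom, le_div_iff₀ (by linarith : (0:ℝ) < 1 - r)]
      have hnum : 1 - r^2*m ≤ ‖f ((r:ℂ)*b) - f b‖ := by
        have h5 : ‖f b‖ - ‖f ((r:ℂ)*b)‖ ≤ ‖f ((r:ℂ)*b) - f b‖ := by
          rw [norm_sub_rev]; exact norm_sub_norm_le _ _
        rw [hfz, hfbn] at h5
        exact h5
      have halg : (1+r+r^2+a*r)/(1+a*r) * (1-r) ≤ 1 - r^2*m := by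
        rw [div_mul_eq_mul_div, div_le_iff₀ hden1]
        have h8 : r^2 * (m*(1+a*r)) ≤ r^2*(a+r) := mul_le_mul_of_nonneg_left hm (sq_nonneg r)
        nlinarith [h8]
      linarith
    have hφt : Tendsto (fun r : ℝ => (1+r+r^2+a*r)/(1+a*r)) (nhdsWithin 1 (Set.Ioo (0:ℝ) 1))
        (nhds ((3+a)/(1+a))) := by
      have hcnum : Continuous fun r : ℝ => 1+r+r^2+a*r :=
        ((continuous_const.add continuous_id).add (continuous_pow 2)).add
          (continuous_const.mul continuous_id)
      have hcden : Continuous fun r : ℝ => 1+a*r :=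
        continuous_const.add (continuous_const.mul continuous_id)
      have h6 := (hcnum.tendsto 1).div (hcden.tendsto 1) (by nlinarith)
      have h7 : (1+1+1^2+a*1)/(1+a*1) = (3+a)/(1+a) := by norm_num
      rw [h7] at h6
      exact h6.mono_left nhdsWithin_le_nhds
    have hge : (3+a)/(1+a) ≤ ‖fb'‖ := by
      refine le_of_tendsto_of_tendsto hφt hqt ?_
      filter_upwards [self_mem_nhdsWithin] with r hr
      exact hlow r hr
    have h1a : (0:ℝ) < 1 + a := by linarith
    constructor
    · refine le_trans ?_ hge
      rw [le_div_iff₀ h1a]; linarith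
    · intro _
      refine lt_of_lt_of_le ?_ hge
      rw [lt_div_iff₀ h1a]; linarith
end

section
/- (Higher-order interior Schwarz Lemma) Let f be holomorphic on the open unit disk D with |f(z)| < 1 on D, let k ≥ 1, and suppose the Taylor coefficients of f at 0 satisfy a₀ = a₁ = ⋯ = a_{k−1} = 0. Then for every z ∈ D, |f(z)| ≤ |z|^k · (|z| + |a_k|)/(1 + |a_k| |z|). -/
open Complex Metric Set Function

private lemma one_sub_ne_zero_of_abs_lt {w : ℂ} (h : ‖w‖ < 1) : 1 - w ≠ 0 := by
  intro hh
  have : w = 1 := by linear_combination -hh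
  simp [this] at h

private lemma mobius_map_lt {b w : ℂ} (hb : ‖b‖ < 1) (hw : ‖w‖ < 1) :
    ‖(w - b) / (1 - (starRingEnd ℂ) b * w)‖ < 1 := by
  have hden : 1 - (starRingEnd ℂ) b * w ≠ 0 := by
    apply one_sub_ne_zero_of_abs_lt
    rw [norm_mul, Complex.norm_conj]
    nlinarith [norm_nonneg b, norm_nonneg w]
  rw [norm_div, div_lt_one (norm_pos_iff.mpr hden)]
  have h1 : Complex.normSq b < 1 := by
    rw [← Complex.sq_norm]; nlinarith [norm_nonneg b]
  have h2 : Complex.normSq w < 1 := by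
    rw [← Complex.sq_norm]; nlinarith [norm_nonneg w]
  have key : Complex.normSq (w - b) < Complex.normSq (1 - (starRingEnd ℂ) b * w) := by
    simp only [Complex.normSq_apply, Complex.sub_re, Complex.sub_im, Complex.mul_re,
      Complex.mul_im, Complex.conj_re, Complex.conj_im, Complex.one_re, Complex.one_im,
      Complex.normSq_apply] at h1 h2 ⊢
    nlinarith [mul_pos (sub_pos.2 h1) (sub_pos.2 h2)]
  have := Real.sqrt_lt_sqrt (Complex.normSq_nonneg _) key
  rwa [← Complex.norm_def, ← Complex.norm_def] at this

private lemma key_ineq {b v : ℂ} {s : ℝ} (hb : ‖b‖ ≤ 1) (hv : ‖v‖ ≤ s)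
    (hs : s ≤ 1) :
    ‖v + b‖ * (1 + ‖b‖ * s) ≤
      (s + ‖b‖) * ‖1 + (starRingEnd ℂ) b * v‖ := by
  set T := ‖b‖ with hT
  set r := ‖v‖ with hr
  set x := ((starRingEnd ℂ) b * v).re with hx
  have hT0 : 0 ≤ T := norm_nonneg b
  have hr0 : 0 ≤ r := norm_nonneg v
  have hxTr : x ≤ T * r := by
    calc x ≤ ‖(starRingEnd ℂ) b * v‖ := Complex.re_le_norm _
    _ = T * r := by rw [norm_mul, Complex.norm_conj]
  have e1 : (‖v + b‖) ^ 2 = r ^ 2 + T ^ 2 + 2 * x := by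
    rw [hT, hr, Complex.sq_norm, Complex.sq_norm, Complex.sq_norm]
    simp only [Complex.normSq_apply, Complex.add_re, Complex.add_im, Complex.mul_re,
      Complex.mul_im, Complex.conj_re, Complex.conj_im, hx]
    ring
  have e2 : (‖1 + (starRingEnd ℂ) b * v‖) ^ 2 = 1 + 2 * x + T ^ 2 * r ^ 2 := by
    rw [hT, hr, Complex.sq_norm, Complex.sq_norm, Complex.sq_norm]
    simp only [Complex.normSq_apply, Complex.add_re, Complex.add_im, Complex.mul_re,
      Complex.mul_im, Complex.conj_re, Complex.conj_im, Complex.one_re, Complex.one_im, hx]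
    ring
  have hrs : r ≤ s := hv
  have hs0 : 0 ≤ s := hr0.trans hrs
  have sq_le : (‖v + b‖ * (1 + T * s)) ^ 2 ≤
      ((s + T) * ‖1 + (starRingEnd ℂ) b * v‖) ^ 2 := by
    rw [mul_pow, mul_pow, e1, e2]

    nlinarith [mul_nonneg (sub_nonneg.2 hxTr)
        (mul_nonneg (mul_nonneg (sub_nonneg.2 hs) (sub_nonneg.2 hb))
          (by positivity : (0:ℝ) ≤ (1 + T * s) + (s + T))),
      mul_nonneg (mul_nonneg (sub_nonneg.2 hrs) (by nlinarith : (0:ℝ) ≤ 1 - T ^ 2))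
        (by positivity : (0:ℝ) ≤ (s + T) * (1 + T * r) + (1 + T * s) * (r + T))]
  have h1 : 0 ≤ ‖v + b‖ * (1 + T * s) := by positivity
  have h2 : 0 ≤ (s + T) * ‖1 + (starRingEnd ℂ) b * v‖ := by positivity
  exact (pow_le_pow_iff_left₀ h1 h2 two_ne_zero).1 sq_le


/-- **Higher-order interior Schwarz Lemma.** Let `f` be holomorphic on the unit disk
with `|f| < 1` there, `k ≥ 1`, and suppose the Taylor coefficients
`aₙ = f⁽ⁿ⁾(0)/n!` vanish for all `n < k`. Then with `aₖ = f⁽ᵏ⁾(0)/k!`,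
`|f z| ≤ |z|ᵏ (|z| + |aₖ|) / (1 + |aₖ| |z|)` for all `z` in the disk. -/
theorem higher_order_interior_schwarz
    (f : ℂ → ℂ) (k : ℕ) (hk : 1 ≤ k)
    (ha : DifferentiableOn ℂ f {z : ℂ | ‖z‖ < 1})
    (hb : ∀ z : ℂ, ‖z‖ < 1 → ‖f z‖ < 1)
    (hcoeff : ∀ n < k, iteratedDeriv n f 0 / (Nat.factorial n : ℂ) = 0) :
    ∀ z : ℂ, ‖z‖ < 1 →
      ‖f z‖ ≤ ‖z‖ ^ k *
        ((‖z‖ + ‖iteratedDeriv k f 0 / (Nat.factorial k : ℂ)‖) /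
          (1 + ‖iteratedDeriv k f 0 / (Nat.factorial k : ℂ)‖ *
            ‖z‖)) := by
  have hset : {z : ℂ | ‖z‖ < 1} = ball (0 : ℂ) 1 := by
    ext w; simp [mem_ball_zero_iff]
  rw [hset] at ha
  -- power series of f at 0
  obtain ⟨p, hp⟩ : AnalyticAt ℂ f 0 :=
    (ha.analyticAt (isOpen_ball.mem_nhds (by simp)))
  have hpcoeff : ∀ n : ℕ, p.coeff n = iteratedDeriv n f 0 / (Nat.factorial n : ℂ) := by
    intro n
    obtain ⟨r, hpr⟩ := hp
    have h1 := hpr.factorial_smul (1 : ℂ) n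
    have h2 : p n (fun _ ↦ (1:ℂ)) = p.coeff n := rfl
    rw [h2, ← iteratedDeriv_eq_iteratedFDeriv] at h1
    rw [eq_div_iff (by exact_mod_cast n.factorial_ne_zero)]
    rw [← h1, nsmul_eq_mul]
    ring
  set g : ℂ → ℂ := (swap dslope 0)^[k] f with hg
  have hgps := hp.has_fpower_series_iterate_dslope_fslope k
  have hg0 : g 0 = p.coeff k := by
    rw [hg, ← hgps.coeff_zero (fun _ ↦ (1:ℂ))]
    show (FormalMultilinearSeries.fslope^[k] p).coeff 0 = p.coeff k
    rw [FormalMultilinearSeries.coeff_iterate_fslope, zero_add]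
  have hf0 : f 0 = 0 := by
    have := hcoeff 0 hk
    simpa using this
  -- vanishing of lower iterates at 0
  have hFzero : ∀ m < k, (swap dslope 0)^[m] f 0 = 0 := by
    intro m hm
    have hmp := hp.has_fpower_series_iterate_dslope_fslope m
    rw [← hmp.coeff_zero (fun _ ↦ (1:ℂ))]
    show (FormalMultilinearSeries.fslope^[m] p).coeff 0 = 0
    rw [FormalMultilinearSeries.coeff_iterate_fslope, zero_add, hpcoeff m, hcoeff m hm]
  -- factorization f w = w^k * g w
  have hfactor : ∀ w : ℂ, f w = w ^ k * g w := by
    have main : ∀ m, m ≤ k → ∀ w : ℂ, w ≠ 0 →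
        (swap dslope 0)^[m] f w = f w / w ^ m := by
      intro m
      induction m with
      | zero => intro _ w _; simp
      | succ n ih =>
        intro hnk w hw
        rw [Function.iterate_succ_apply', Function.swap]
        rw [dslope_of_ne _ hw, slope_def_field, ih (le_of_lt hnk) w hw,
          hFzero n hnk, sub_zero, sub_zero, div_div, ← pow_succ]
    intro w
    rcases eq_or_ne w 0 with rfl | hw
    · rw [hf0, zero_pow (by omega), zero_mul]
    · rw [hg, main k le_rfl w hw]
      field_simp
  -- differentiability of g
  have hgdiff : DifferentiableOn ℂ g (ball 0 1) := by
    rw [hg]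
    have : ∀ m : ℕ, DifferentiableOn ℂ ((swap dslope 0)^[m] f) (ball 0 1) := by
      intro m
      induction m with
      | zero => simpa using ha
      | succ n ih =>
        rw [Function.iterate_succ_apply']
        exact (differentiableOn_dslope (isOpen_ball.mem_nhds (by simp))).mpr ih
    exact this k
  -- |g| ≤ 1 on the ball
  have hgle : ∀ w : ℂ, ‖w‖ < 1 → ‖g w‖ ≤ 1 := by
    intro w hw
    have hbound : ∀ r ∈ Ioo (‖w‖) 1, ‖g w‖ ≤ 1 / r ^ k := by
      intro r hr
      have hr0 : 0 < r := (norm_nonneg w).trans_lt hr.1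
      have hdc : DiffContOnCl ℂ g (ball 0 r) := by
        refine DifferentiableOn.diffContOnCl ?_
        rw [closure_ball (0:ℂ) hr0.ne']
        exact hgdiff.mono (closedBall_subset_ball hr.2)
      refine norm_le_of_forall_mem_frontier_norm_le isBounded_ball hdc ?_ ?_
      · rw [frontier_ball (0:ℂ) hr0.ne']
        intro u hu
        have hur : ‖u‖ = r := by
          simpa [Complex.dist_eq] using mem_sphere.mp hu
        have hu1 : ‖u‖ < 1 := hur ▸ hr.2
        have hfu : ‖f u‖ = r ^ k * ‖g u‖ := by
          rw [hfactor u, norm_mul, norm_pow, hur]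
        have hfu1 : ‖f u‖ ≤ 1 := (hb u hu1).le
        rw [le_div_iff₀ (by positivity : (0:ℝ) < r ^ k)]
        rw [hfu] at hfu1
        linarith
      · rw [closure_ball (0:ℂ) hr0.ne', mem_closedBall, Complex.dist_eq, sub_zero]
        exact hr.1.le
    have htt : Filter.Tendsto (fun r : ℝ => 1 / r ^ k) (nhdsWithin 1 (Iio 1)) (nhds 1) := by
      have hc : ContinuousAt (fun r : ℝ => 1 / r ^ k) 1 := by
        apply ContinuousAt.div continuousAt_const (by fun_prop)
        norm_num
      have := hc.continuousWithinAt (s := Iio (1:ℝ)) |>.tendsto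
      simpa using this
    refine ge_of_tendsto htt ?_
    filter_upwards [Ioo_mem_nhdsLT_of_mem ⟨hw, le_rfl⟩] with r hr using hbound r hr
  -- main argument
  intro z hz
  rw [show iteratedDeriv k f 0 / (Nat.factorial k : ℂ) = p.coeff k from (hpcoeff k).symm]
  set s := ‖z‖ with hsdef
  set a := p.coeff k with hadef
  have haleg : ‖a‖ ≤ 1 := by
    rw [← hg0]
    exact hgle 0 (by simp)
  have hs0 : 0 ≤ s := norm_nonneg z
  have hs1 : s < 1 := hz
  suffices H : ∀ t ∈ Ioo (0:ℝ) 1, ‖f z‖ ≤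
      s ^ k * ((s + t * ‖a‖) / (t * (1 + t * ‖a‖ * s))) by
    have hpos : (0:ℝ) < 1 + ‖a‖ * s := by positivity
    have hc : ContinuousAt (fun t : ℝ =>
        s ^ k * ((s + t * ‖a‖) / (t * (1 + t * ‖a‖ * s)))) 1 := by
      apply ContinuousAt.mul continuousAt_const
      apply ContinuousAt.div (by fun_prop) (by fun_prop)
      simpa using hpos.ne'
    have htt := hc.continuousWithinAt (s := Iio (1:ℝ)) |>.tendsto
    simp only [one_mul] at htt
    refine ge_of_tendsto htt ?_
    filter_upwards [Ioo_mem_nhdsLT_of_mem (by constructor <;> norm_num : (1:ℝ) ∈ Ioc (0:ℝ) 1)]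
      with t ht using H t ht
  intro t ht
  obtain ⟨ht0, ht1⟩ := ht
  set b : ℂ := (t:ℂ) * a with hbdef
  have habs_b : ‖b‖ = t * ‖a‖ := by
    rw [hbdef, norm_mul, Complex.norm_real, Real.norm_eq_abs, abs_of_pos ht0]
  have hb1 : ‖b‖ < 1 := by
    rw [habs_b]; nlinarith [norm_nonneg a]
  set G : ℂ → ℂ := fun w => (t:ℂ) * g w with hGdef
  have habs_G : ∀ w : ℂ, ‖G w‖ = t * ‖g w‖ := by
    intro w; rw [hGdef]; simp only
    rw [norm_mul, Complex.norm_real, Real.norm_eq_abs, abs_of_pos ht0]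
  have hGlt : ∀ w : ℂ, ‖w‖ < 1 → ‖G w‖ < 1 := by
    intro w hw
    rw [habs_G w]
    nlinarith [hgle w hw, norm_nonneg (g w)]
  have hG0 : G 0 = b := by rw [hGdef, hbdef]; simp only; rw [hg0]
  set h : ℂ → ℂ := fun w => (G w - b) / (1 - (starRingEnd ℂ) b * G w) with hhdef
  have hden : ∀ w : ℂ, ‖w‖ < 1 → 1 - (starRingEnd ℂ) b * G w ≠ 0 := by
    intro w hw
    apply one_sub_ne_zero_of_abs_lt
    rw [norm_mul, Complex.norm_conj]
    nlinarith [hGlt w hw, norm_nonneg b, norm_nonneg (G w)]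
  have hGdiff : DifferentiableOn ℂ G (ball 0 1) := hgdiff.const_smul (t:ℂ)
  have hhdiff : DifferentiableOn ℂ h (ball 0 1) := by
    rw [hhdef]
    apply DifferentiableOn.div
    · exact hGdiff.sub (differentiableOn_const _)
    · exact (differentiableOn_const _).sub (hGdiff.const_smul ((starRingEnd ℂ) b))
    · intro w hw
      exact hden w (by simpa [mem_ball_zero_iff] using hw)
  have hmaps : MapsTo h (ball 0 1) (ball 0 1) := by
    intro w hw
    rw [mem_ball_zero_iff] at hw ⊢
    exact mobius_map_lt hb1 (hGlt w hw)
  have hh0 : h 0 = 0 := by rw [hhdef]; simp [hG0]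
  have hschwarz : ‖h z‖ ≤ s :=
    Complex.norm_le_norm_of_mapsTo_ball hhdiff (hmaps.mono_right ball_subset_closedBall) hh0 hz
  have hd0 : 1 - (starRingEnd ℂ) b * G z ≠ 0 := hden z hz
  have hid : G z * (1 + (starRingEnd ℂ) b * h z) = h z + b := by
    rw [hhdef]
    simp only
    have hd0' : 1 - G z * (starRingEnd ℂ) b ≠ 0 := by rw [mul_comm]; exact hd0
    field_simp
    ring
  have hbb : (1 : ℂ) - (starRingEnd ℂ) b * b ≠ 0 := by
    apply one_sub_ne_zero_of_abs_lt
    rw [norm_mul, Complex.norm_conj]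
    nlinarith [norm_nonneg b]
  have hnum : 1 + (starRingEnd ℂ) b * h z =
      (1 - (starRingEnd ℂ) b * b) / (1 - (starRingEnd ℂ) b * G z) := by
    rw [hhdef]
    simp only
    field_simp
    ring
  have hdenh : (0:ℝ) < ‖1 + (starRingEnd ℂ) b * h z‖ := by
    apply norm_pos_iff.mpr
    rw [hnum]
    exact div_ne_zero hbb hd0
  have hKey := key_ineq hb1.le hschwarz hs1.le (v := h z) (b := b)
  have hGzb : ‖G z‖ * ‖1 + (starRingEnd ℂ) b * h z‖
      = ‖h z + b‖ := by rw [← norm_mul, hid]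
  have hGle : ‖G z‖ * (1 + ‖b‖ * s) ≤ s + ‖b‖ := by
    rw [← mul_le_mul_iff_of_pos_right hdenh]
    calc ‖G z‖ * (1 + ‖b‖ * s) * ‖1 + (starRingEnd ℂ) b * h z‖
        = (‖G z‖ * ‖1 + (starRingEnd ℂ) b * h z‖)
            * (1 + ‖b‖ * s) := by ring
      _ = ‖h z + b‖ * (1 + ‖b‖ * s) := by rw [hGzb]
      _ ≤ (s + ‖b‖) * ‖1 + (starRingEnd ℂ) b * h z‖ := hKey
  have hfz : ‖f z‖ = s ^ k * ‖g z‖ := by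
    rw [hfactor z, norm_mul, norm_pow]
  rw [hfz, habs_b] at *
  rw [habs_G z] at hGle
  have hgz : ‖g z‖ ≤ (s + t * ‖a‖) / (t * (1 + t * ‖a‖ * s)) := by
    rw [le_div_iff₀ (by positivity)]
    nlinarith [norm_nonneg (g z)]
  exact mul_le_mul_of_nonneg_left hgz (by positivity)
end

section
/- (Higher-order boundary Schwarz Lemma) Let f be holomorphic on the open unit disk D with |f(z)| < 1 on D, let k ≥ 1, and suppose the Taylor coefficients of f at 0 satisfy a₀ = a₁ = ⋯ = a_{k−1} = 0. Suppose further that for some b with |b| = 1, f extends continuously to b, |f(b)| = 1, and f'(b) exists. Then |f'(b)| ≥ k + (1 − |a_k|)/(1 + |a_k|). -/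
open Complex Filter Function Metric NNReal Finset

private lemma sp_arith (u t c s : ℝ) (hu0 : 0 ≤ u) (ht0 : 0 ≤ t) (ht : t < 1)
    (hc0 : 0 ≤ c) (hc : c < 1) (hs : s ≤ c * u)
    (hq : u^2 + c^2 - 2*s ≤ t^2 * (1 + c^2*u^2 - 2*s)) :
    u * (1 + c*t) ≤ c + t := by
  by_contra hcon
  push_neg at hcon
  have hct : c*t < 1 := by nlinarith
  have hX : 0 < (1+c*t)*u - (c+t) := by nlinarith
  have ht2 : (0:ℝ) ≤ 1 - t^2 := by nlinarith
  have hs2 := mul_le_mul_of_nonneg_right hs ht2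
  have hP : ((1+c*t)*u - (c+t)) * ((1-c*t)*u - (c-t)) ≤ 0 := by nlinarith
  have hY : (1-c*t)*u - (c-t) ≤ 0 := by
    by_contra hY
    push_neg at hY
    nlinarith [mul_pos hX hY]
  nlinarith [mul_pos hX (show (0:ℝ) < 1 - c*t by linarith),
    mul_nonpos_of_nonpos_of_nonneg hY (show (0:ℝ) ≤ 1 + c*t by nlinarith),
    mul_nonneg ht0 (show (0:ℝ) ≤ 1 - c^2 by nlinarith)]

/-- value of iterated dslope at the center, as a Taylor coefficient. -/
private lemma iterate_dslope_zero (f : ℂ → ℂ) (ha : DifferentiableOn ℂ f (ball (0:ℂ) 1)) (j : ℕ) :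
    ((Function.swap dslope 0)^[j] f) 0 = iteratedDeriv j f 0 / (Nat.factorial j : ℂ) := by
  have hd2 : DifferentiableOn ℂ f (closedBall (0:ℂ) ((1/2 : ℝ≥0) : ℝ)) :=
    ha.mono (closedBall_subset_ball (by norm_num))
  have hps := hd2.hasFPowerSeriesOnBall (by norm_num : (0:ℝ≥0) < 1/2)
  have hpa := hps.hasFPowerSeriesAt
  have h1 := (hpa.has_fpower_series_iterate_dslope_fslope j).coeff_zero 1
  have h2 := (cauchyPowerSeries f 0 (1/2 : ℝ≥0)).coeff_iterate_fslope j 0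
  have h3 := hps.factorial_smul (1:ℂ) j
  rw [← iteratedDeriv_eq_iteratedFDeriv] at h3
  have hcoeff : (cauchyPowerSeries f 0 (1/2 : ℝ≥0)).coeff j
      = iteratedDeriv j f 0 / (Nat.factorial j : ℂ) := by
    rw [eq_div_iff (by exact_mod_cast (Nat.factorial_ne_zero j))]
    rw [← h3, FormalMultilinearSeries.coeff, nsmul_eq_mul, mul_comm]
    rfl
  have h1' : (FormalMultilinearSeries.fslope^[j] (cauchyPowerSeries f 0 (1/2 : ℝ≥0))).coeff 0
      = (Function.swap dslope 0)^[j] f 0 := h1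
  rw [← h1', h2, zero_add, hcoeff]

/-- **Higher-order boundary Schwarz Lemma.** Let `f` be holomorphic on the unit disk
with `|f| < 1` there, `k ≥ 1`, with Taylor coefficients `aₙ = f⁽ⁿ⁾(0)/n!` vanishing
for `n < k`. If `f` extends continuously to a boundary point `b` with `|f b| = 1` and
has derivative `fb'` at `b` (as a limit within the disk), then
`|f'(b)| ≥ k + (1 - |aₖ|) / (1 + |aₖ|)`. -/
theorem higher_order_boundary_schwarz
    (f : ℂ → ℂ) (k : ℕ) (hk : 1 ≤ k) (b fb' : ℂ)
    (ha : DifferentiableOn ℂ f {z : ℂ | ‖z‖ < 1})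
    (hb : ∀ z : ℂ, ‖z‖ < 1 → ‖f z‖ < 1)
    (hcoeff : ∀ n < k, iteratedDeriv n f 0 / (Nat.factorial n : ℂ) = 0)
    (hbmod : ‖b‖ = 1)
    (hcont : ContinuousWithinAt f ({z : ℂ | ‖z‖ < 1} ∪ {b}) b)
    (hfb : ‖f b‖ = 1)
    (hderiv : Tendsto (fun z => (f z - f b) / (z - b))
      (nhdsWithin b {z : ℂ | ‖z‖ < 1}) (nhds fb')) :
    (k : ℝ) + (1 - ‖iteratedDeriv k f 0 / (Nat.factorial k : ℂ)‖) /
        (1 + ‖iteratedDeriv k f 0 / (Nat.factorial k : ℂ)‖) ≤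
      ‖fb'‖ := by
  have hsetball : {z : ℂ | ‖z‖ < 1} = ball (0:ℂ) 1 := by
    ext z; simp [Metric.mem_ball, Complex.dist_eq]
  rw [hsetball] at ha hderiv
  -- the iterated dslope function
  set g : ℂ → ℂ := (Function.swap dslope 0)^[k] f with hg
  have key : ∀ j, j ≤ k →
      DifferentiableOn ℂ ((Function.swap dslope 0)^[j] f) (ball (0:ℂ) 1) ∧
      (∀ z ∈ ball (0:ℂ) 1, ‖((Function.swap dslope 0)^[j] f) z‖ ≤ 1) ∧
      (∀ z : ℂ, z ^ j * ((Function.swap dslope 0)^[j] f) z = f z) := by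
    intro j
    induction j with
    | zero =>
      intro _
      refine ⟨by simpa using ha, fun z hz => ?_, fun z => by simp⟩
      simpa using (hb z (by simpa [Complex.dist_eq] using hz)).le
    | succ n ihn =>
      intro hjk
      obtain ⟨hdiff, hbd, hid⟩ := ihn (Nat.le_of_succ_le hjk)
      have h0 : ((Function.swap dslope 0)^[n] f) 0 = 0 := by
        rw [iterate_dslope_zero f ha n]
        exact hcoeff n (lt_of_lt_of_le (Nat.lt_succ_self n) hjk)
      have hstep : (Function.swap dslope 0)^[n+1] f
          = dslope ((Function.swap dslope 0)^[n] f) 0 := by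
        rw [Function.iterate_succ_apply']
      set h : ℂ → ℂ := (Function.swap dslope 0)^[n] f with hh
      refine ⟨?_, ?_, ?_⟩
      · rw [hstep]
        exact (differentiableOn_dslope (isOpen_ball.mem_nhds (mem_ball_self one_pos))).mpr hdiff
      · intro z hz
        rw [hstep]
        have hle : ∀ ε : ℝ, 0 < ε → ‖dslope h 0 z‖ ≤ 1 + ε := by
          intro ε hε
          have hmaps : Set.MapsTo h (ball (0:ℂ) 1) (ball (h 0) (1 + ε)) := by
            intro w hw
            rw [Metric.mem_ball, h0, Complex.dist_eq, sub_zero]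
            exact lt_of_le_of_lt (hbd w hw) (by linarith)
          have := Complex.norm_dslope_le_div_of_mapsTo_ball hdiff (hmaps.mono_right ball_subset_closedBall) hz
          rwa [div_one] at this
        have := le_of_forall_pos_le_add (fun ε hε => hle ε hε)
        exact this
      · intro z
        have hs := sub_smul_dslope h 0 z
        rw [sub_zero, smul_eq_mul, h0, sub_zero] at hs
        rw [hstep, pow_succ, mul_assoc, hs, hid]
  obtain ⟨hgd, hgb, hgid⟩ := key k le_rfl
  rw [← hg] at hgd hgb hgid
  have hg0 : g 0 = iteratedDeriv k f 0 / (Nat.factorial k : ℂ) := iterate_dslope_zero f ha k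
  rw [← hg0]
  set c₀ : ℂ := g 0 with hc₀
  set c : ℝ := ‖c₀‖ with hcdef
  have hc0 : 0 ≤ c := norm_nonneg _
  have hc1 : c ≤ 1 := by simpa using hgb 0 (mem_ball_self one_pos)
  -- Schwarz–Pick estimate for g
  have hSP : ∀ z ∈ ball (0:ℂ) 1,
      ‖g z‖ ≤ (c + ‖z‖) / (1 + c * ‖z‖) := by
    by_cases hex : ∃ z₀ ∈ ball (0:ℂ) 1, ‖g z₀‖ = 1
    · obtain ⟨z₀, hz₀, habs1⟩ := hex
      have hmax : IsMaxOn (norm ∘ g) (ball (0:ℂ) 1) z₀ := by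
        intro z hz
        simp only [Function.comp_apply, habs1]
        exact hgb z hz
      have heq := Complex.eqOn_of_isPreconnected_of_isMaxOn_norm
        (convex_ball (0:ℂ) 1).isPreconnected isOpen_ball hgd hz₀ hmax
      have hcone : c = 1 := by
        have := heq (mem_ball_self one_pos)
        rw [hcdef, hc₀, this]
        simpa using habs1
      intro z hz
      have hz1 : ‖z‖ < 1 := by simpa [Complex.dist_eq] using hz
      have : g z = g z₀ := heq hz
      have hne : (1:ℝ) + ‖z‖ ≠ 0 := by positivity
      rw [this, habs1, hcone, one_mul, div_self hne]
    · push_neg at hex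
      have hlt : ∀ z ∈ ball (0:ℂ) 1, ‖g z‖ < 1 :=
        fun z hz => lt_of_le_of_ne (hgb z hz) (hex z hz)
      have hclt : c < 1 := hlt 0 (mem_ball_self one_pos)
      have hden : ∀ z ∈ ball (0:ℂ) 1, 1 - (starRingEnd ℂ) c₀ * g z ≠ 0 := by
        intro z hz h
        have : ‖(starRingEnd ℂ) c₀ * g z‖ < 1 := by
          rw [norm_mul, Complex.norm_conj]
          calc c * ‖g z‖ ≤ 1 * ‖g z‖ :=
                mul_le_mul_of_nonneg_right hc1 (norm_nonneg _)
            _ = ‖g z‖ := one_mul _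
            _ < 1 := hlt z hz
        rw [sub_eq_zero] at h
        rw [← h] at this
        simp at this
      set H : ℂ → ℂ := fun z => (g z - c₀) / (1 - (starRingEnd ℂ) c₀ * g z) with hH
      have HDiff : DifferentiableOn ℂ H (ball (0:ℂ) 1) :=
        DifferentiableOn.div (hgd.sub (differentiableOn_const c₀))
          ((differentiableOn_const 1).sub ((differentiableOn_const _).mul hgd)) hden
      have H0 : H 0 = 0 := by simp [hH, ← hc₀]
      have hid2 : ∀ w v : ℂ, Complex.normSq (1 - (starRingEnd ℂ) v * w)
          - Complex.normSq (w - v) = (1 - Complex.normSq v) * (1 - Complex.normSq w) := by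
        intro w v
        simp only [Complex.normSq_apply, Complex.sub_re, Complex.sub_im, Complex.mul_re,
          Complex.mul_im, Complex.one_re, Complex.one_im, Complex.conj_re, Complex.conj_im]
        ring
      have Hmaps : Set.MapsTo H (ball (0:ℂ) 1) (ball (0:ℂ) 1) := by
        intro z hz
        rw [Metric.mem_ball, Complex.dist_eq, sub_zero, hH]
        have hdz := hden z hz
        have habs : ‖g z - c₀‖ < ‖1 - (starRingEnd ℂ) c₀ * g z‖ := by
          rw [Complex.norm_def, Complex.norm_def]
          apply Real.sqrt_lt_sqrt (Complex.normSq_nonneg _)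
          have hpos : 0 < (1 - Complex.normSq c₀) * (1 - Complex.normSq (g z)) := by
            apply mul_pos
            · rw [Complex.normSq_eq_norm_sq]; nlinarith
            · rw [Complex.normSq_eq_norm_sq]
              have := hlt z hz
              nlinarith [norm_nonneg (g z)]
          have := hid2 (g z) c₀
          linarith
        rw [norm_div]
        exact (div_lt_one (lt_of_le_of_lt (norm_nonneg _) habs)).mpr habs
      have hSch : ∀ z ∈ ball (0:ℂ) 1, ‖H z‖ ≤ ‖z‖ := by
        intro z hz
        exact Complex.norm_le_norm_of_mapsTo_ball HDiff (Hmaps.mono_right ball_subset_closedBall) H0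
          (by simpa [Complex.dist_eq] using hz)
      intro z hz
      have hz1 : ‖z‖ < 1 := by simpa [Complex.dist_eq] using hz
      set u : ℝ := ‖g z‖ with hu
      set t : ℝ := ‖z‖ with htd
      rw [le_div_iff₀ (by positivity)]
      have hdz := hden z hz
      have hnum : ‖g z - c₀‖ ≤ t * ‖1 - (starRingEnd ℂ) c₀ * g z‖ := by
        have := hSch z hz
        rw [hH] at this
        simp only at this
        rw [norm_div, div_le_iff₀ (by
          exact (norm_pos_iff.mpr hdz))] at this
        linarith [this]
      have hsq := mul_self_le_mul_self (norm_nonneg (g z - c₀)) hnum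
      set s : ℝ := ((starRingEnd ℂ) c₀ * g z).re with hsdef
      have e1 : ‖g z - c₀‖ ^ 2 = u^2 + c^2 - 2*s := by
        rw [← Complex.normSq_eq_norm_sq]
        simp only [hu, hcdef, ← Complex.normSq_eq_norm_sq, hsdef]
        simp only [Complex.normSq_apply, Complex.sub_re, Complex.sub_im, Complex.mul_re,
          Complex.mul_im, Complex.conj_re, Complex.conj_im]
        ring
      have e2 : ‖1 - (starRingEnd ℂ) c₀ * g z‖ ^ 2 = 1 + c^2*u^2 - 2*s := by
        rw [← Complex.normSq_eq_norm_sq]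
        simp only [hu, hcdef, ← Complex.normSq_eq_norm_sq, hsdef]
        simp only [Complex.normSq_apply, Complex.sub_re, Complex.sub_im, Complex.mul_re,
          Complex.mul_im, Complex.one_re, Complex.one_im, Complex.conj_re, Complex.conj_im]
        ring
      have hsle : s ≤ c * u := by
        calc s ≤ ‖(starRingEnd ℂ) c₀ * g z‖ := Complex.re_le_norm _
          _ = c * u := by rw [norm_mul, Complex.norm_conj]
      have hq : u^2 + c^2 - 2*s ≤ t^2 * (1 + c^2*u^2 - 2*s) := by
        have h1 : ‖g z - c₀‖ * ‖g z - c₀‖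
            = ‖g z - c₀‖ ^ 2 := (sq _).symm
        have h2 : (t * ‖1 - (starRingEnd ℂ) c₀ * g z‖)
            * (t * ‖1 - (starRingEnd ℂ) c₀ * g z‖)
            = t^2 * (‖1 - (starRingEnd ℂ) c₀ * g z‖)^2 := by ring
        rw [h1, h2, e1, e2] at hsq
        exact hsq
      have := sp_arith u t c s (norm_nonneg _) (norm_nonneg _) hz1 hc0 hclt hsle hq
      linarith [this]
  -- pointwise bound for f
  have habsf : ∀ z ∈ ball (0:ℂ) 1, ‖f z‖
      ≤ (‖z‖)^k * ((c + ‖z‖) / (1 + c * ‖z‖)) := by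
    intro z hz
    have : f z = z ^ k * g z := (hgid z).symm
    rw [this, norm_mul, norm_pow]
    exact mul_le_mul_of_nonneg_left (hSP z hz) (by positivity)
  -- limit along the radius
  obtain ⟨m, rfl⟩ : ∃ m, k = m + 1 := ⟨k - 1, (Nat.succ_pred_eq_of_pos hk).symm⟩
  set l : Filter ℝ := nhdsWithin 1 (Set.Ioo (0:ℝ) 1) with hl
  haveI hlne : l.NeBot := right_nhdsWithin_Ioo_neBot (by norm_num)
  have hφ : Tendsto (fun r : ℝ => (r:ℂ) * b) l (nhdsWithin b (ball (0:ℂ) 1)) := by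
    rw [tendsto_nhdsWithin_iff]
    constructor
    · have hcont' : Tendsto (fun r : ℝ => (r:ℂ) * b) (nhds 1) (nhds (((1:ℝ):ℂ) * b)) :=
        ((Complex.continuous_ofReal.mul continuous_const).tendsto 1)
      simpa using hcont'.mono_left nhdsWithin_le_nhds
    · filter_upwards [self_mem_nhdsWithin] with r hr
      rw [Metric.mem_ball, Complex.dist_eq, sub_zero, norm_mul, Complex.norm_real, Real.norm_eq_abs, hbmod,
        mul_one, abs_of_pos hr.1]
      exact hr.2
  have hA : Tendsto (fun r : ℝ => (f ((r:ℂ)*b) - f b) / ((r:ℂ)*b - b)) l (nhds fb') :=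
    hderiv.comp hφ
  have habsA : Tendsto (fun r : ℝ => ‖(f ((r:ℂ)*b) - f b) / ((r:ℂ)*b - b)‖)
      l (nhds (‖fb'‖)) := (continuous_norm.tendsto fb').comp hA
  set G : ℝ → ℝ := fun r =>
    ((∑ i ∈ Finset.range (m+2), r^i) + c*r*(∑ i ∈ Finset.range m, r^i)) / (1 + c*r) with hG
  have hGcont : ContinuousAt G 1 := by
    apply ContinuousAt.div
    · exact ((continuous_finset_sum _ fun i _ => continuous_pow i).add
        ((continuous_const.mul continuous_id).mul
          (continuous_finset_sum _ fun i _ => continuous_pow i))).continuousAt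
    · exact (continuous_const.add (continuous_const.mul continuous_id)).continuousAt
    · positivity
  have hG1 : G 1 = ((m:ℝ) + 1) + (1 - c)/(1 + c) := by
    rw [hG]
    simp only [one_pow, Finset.sum_const, Finset.card_range, nsmul_eq_mul, mul_one]
    field_simp
    push_cast
    ring
  have hGlim : Tendsto G l (nhds (((m:ℝ) + 1) + (1 - c)/(1 + c))) := by
    rw [← hG1]
    exact hGcont.tendsto.mono_left nhdsWithin_le_nhds
  have hineq : ∀ᶠ r in l, G r ≤ ‖(f ((r:ℂ)*b) - f b) / ((r:ℂ)*b - b)‖ := by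
    filter_upwards [self_mem_nhdsWithin] with r hr
    obtain ⟨hr0, hr1⟩ := hr
    set z : ℂ := (r:ℂ) * b with hz
    have habsz : ‖z‖ = r := by
      rw [hz, norm_mul, Complex.norm_real, Real.norm_eq_abs, hbmod, mul_one, abs_of_pos hr0]
    have hzball : z ∈ ball (0:ℂ) 1 := by
      rw [Metric.mem_ball, Complex.dist_eq, sub_zero, habsz]; exact hr1
    have habssub : ‖z - b‖ = 1 - r := by
      have : z - b = (((r:ℝ) - 1 : ℝ) : ℂ) * b := by rw [hz]; push_cast; ring
      rw [this, norm_mul, Complex.norm_real, Real.norm_eq_abs, hbmod, mul_one, abs_of_neg (by linarith)]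
      ring
    rw [norm_div, habssub, le_div_iff₀ (by linarith)]
    have hfzb : ‖f b‖ - ‖f z‖ ≤ ‖f z - f b‖ := by
      have h1 : ‖f b‖ - ‖f z‖ ≤ ‖f b - f z‖ := norm_sub_norm_le _ _
      rw [norm_sub_rev] at h1
      simpa using h1
    have hfz : ‖f z‖ ≤ r^(m+1) * ((c + r)/(1 + c*r)) := by
      have := habsf z hzball
      rwa [habsz] at this
    have hGfact : G r * (1 - r) = 1 - r^(m+1) * ((c + r)/(1 + c*r)) := by
      have hdpos : (0:ℝ) < 1 + c*r := by positivity
      have g1 := geom_sum_mul r (m+2)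
      have g2 := geom_sum_mul r m
      have keyid : ((∑ i ∈ Finset.range (m+2), r^i) + c*r*(∑ i ∈ Finset.range m, r^i)) * (1-r)
          = (1 + c*r) - r^(m+1)*(c+r) := by
        linear_combination (-1:ℝ)*g1 - (c*r)*g2
      rw [hG]
      simp only
      rw [div_mul_eq_mul_div, keyid]
      field_simp
    calc G r * (1 - r) = 1 - r^(m+1) * ((c + r)/(1 + c*r)) := hGfact
      _ ≤ 1 - ‖f z‖ := by linarith
      _ = ‖f b‖ - ‖f z‖ := by rw [hfb]
      _ ≤ ‖f z - f b‖ := hfzb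
  have hfinal := le_of_tendsto_of_tendsto hGlim habsA hineq
  calc ((m+1 : ℕ) : ℝ) + (1 - c)/(1 + c) = ((m:ℝ) + 1) + (1 - c)/(1 + c) := by push_cast; ring
    _ ≤ ‖fb'‖ := hfinal
end

section
/- (Sharpness of the boundary Schwarz Lemma) For each real a with 0 ≤ a < 1, the function f(z) = z(z + a)/(1 + a z) is holomorphic on the open unit disk D, satisfies |f(z)| < 1 on D, f(0) = 0, f'(0) = a, f(1) = 1 (as a limit within D), and f'(1) = 2/(1 + a); hence equality holds in the inequality |f'(b)| ≥ 2/(1 + |f'(0)|) at b = 1. -/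
open Complex Filter

/-- **Sharpness of the boundary Schwarz Lemma.** For each real `a` with `0 ≤ a < 1`,
the function `f z = z (z + a) / (1 + a z)` is holomorphic on the unit disk, satisfies
`|f z| < 1` there, `f 0 = 0`, `f'(0) = a`, has limit `1` at `1` within the disk, and
`f'(1) = 2 / (1 + a)`; hence equality holds in `|f'(b)| ≥ 2 / (1 + |f'(0)|)` at
`b = 1`. -/
theorem boundary_schwarz_sharp
    (a : ℝ) (ha0 : 0 ≤ a) (ha1 : a < 1)
    (f : ℂ → ℂ)
    (hf : f = fun z : ℂ => z * (z + (a : ℂ)) / (1 + (a : ℂ) * z)) :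
    DifferentiableOn ℂ f {z : ℂ | ‖z‖ < 1} ∧
    (∀ z : ℂ, ‖z‖ < 1 → ‖f z‖ < 1) ∧
    f 0 = 0 ∧
    deriv f 0 = (a : ℂ) ∧
    Tendsto f (nhdsWithin 1 {z : ℂ | ‖z‖ < 1}) (nhds 1) ∧
    deriv f 1 = 2 / (1 + (a : ℂ)) := by
  have ha1' : (1 : ℂ) + (a : ℂ) ≠ 0 := by
    intro h
    have := congrArg Complex.re h
    simp at this
    linarith
  -- denominator nonzero on the disk
  have nz : ∀ z : ℂ, ‖z‖ < 1 → (1 : ℂ) + (a : ℂ) * z ≠ 0 := by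
    intro z hz h
    have h2 : (a : ℂ) * z = -1 := by linear_combination h
    have h3 := congrArg (‖·‖) h2
    simp [norm_mul, Complex.norm_real, _root_.abs_of_nonneg ha0] at h3
    nlinarith [norm_nonneg z]
  have nz1 : (1 : ℂ) + (a : ℂ) * 1 ≠ 0 := by simpa using ha1'
  -- derivative formula
  have hd : ∀ p : ℂ, (1 : ℂ) + (a : ℂ) * p ≠ 0 →
      HasDerivAt f (((2 * p + a) * (1 + a * p) - p * (p + a) * a) / (1 + a * p) ^ 2) p := by
    intro p hp
    have hc : HasDerivAt (fun z : ℂ => z * (z + (a : ℂ))) (1 * (p + a) + p * 1) p :=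
      (hasDerivAt_id p).mul ((hasDerivAt_id p).add_const _)
    have hden : HasDerivAt (fun z : ℂ => 1 + (a : ℂ) * z) (0 + (a : ℂ) * 1) p :=
      (hasDerivAt_const p 1).add ((hasDerivAt_id p).const_mul _)
    have := hc.div hden hp
    rw [hf]
    refine this.congr_deriv ?_
    ring
  refine ⟨?_, ?_, ?_, ?_, ?_, ?_⟩
  · intro z hz
    exact ((hd z (nz z hz)).differentiableAt).differentiableWithinAt
  · intro z hz
    rw [hf]
    simp only
    rw [norm_div, div_lt_one (by
      have := norm_nonneg (1 + (a : ℂ) * z)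
      rcases this.lt_or_eq with h | h
      · exact h
      · exact absurd (norm_eq_zero.mp h.symm) (nz z hz))]
    have hzz : z.re ^ 2 + z.im ^ 2 < 1 := by
      have h2 : ‖z‖ ^ 2 < 1 := by nlinarith [norm_nonneg z]
      rw [Complex.sq_norm, Complex.normSq_apply] at h2
      nlinarith
    apply lt_of_pow_lt_pow_left₀ 2 (norm_nonneg _)
    rw [Complex.sq_norm, Complex.sq_norm, Complex.normSq_apply, Complex.normSq_apply]
    simp only [Complex.mul_re, Complex.mul_im, Complex.add_re, Complex.add_im,
      Complex.ofReal_re, Complex.ofReal_im, Complex.one_re, Complex.one_im]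
    set x := z.re
    set y := z.im
    have hpos : 0 < (1 - (x ^ 2 + y ^ 2)) * (1 + (x ^ 2 + y ^ 2) + 2 * a * x) :=
      mul_pos (by nlinarith) (by nlinarith [sq_nonneg (x + a), sq_nonneg y])
    nlinarith [hpos]
  · simp [hf]
  · rw [(hd 0 (by simp)).deriv]
    simp
  · have hc : ContinuousAt f 1 := (hd 1 nz1).continuousAt
    have hf1 : f 1 = 1 := by
      rw [hf]; simp only
      rw [mul_one, one_mul, div_self ha1']
    have h := hc.continuousWithinAt (s := {z : ℂ | ‖z‖ < 1})
    rw [ContinuousWithinAt, hf1] at h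
    exact h
  · rw [(hd 1 nz1).deriv]
    rw [mul_one] at nz1 ⊢
    field_simp
    ring
end
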